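/- Let n ≥ 1. For every i ≥ 0, the number of abelian Lie ideals of complex dimension i of the Borel subalgebra 𝔟 of 𝔰𝔭(2n,ℂ) (realized as the upper triangular matrices in the symplectic Lie algebra with respect to an antidiagonal symplectic form) equals the coefficient of tⁱ in ∏_{k=1}^{n} (1 + t^k). -/

import Mathlib

open Polynomial

/-- The antidiagonal symplectic form: `S_{i,2n+1-i} = 1` for `1 ≤ i ≤ n`,
`S_{i,2n+1-i} = −1` for `n+1 ≤ i ≤ 2n`, all other entries `0` (here written 0-indexed:
`S i j = ±1` iff `i + j = 2n − 1`). -/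
def sympForm (n : ℕ) : Matrix (Fin (2 * n)) (Fin (2 * n)) ℂ :=
  Matrix.of fun i j =>
    if (i : ℕ) + (j : ℕ) = 2 * n - 1 then (if (i : ℕ) < n then 1 else -1) else 0

/-- The Borel subalgebra `𝔟` of `𝔰𝔭(2n,ℂ)`, as a set: upper triangular matrices `X`
with `Xᵀ·S + S·X = 0`. -/
def borelSp (n : ℕ) : Set (Matrix (Fin (2 * n)) (Fin (2 * n)) ℂ) :=
  {X | X.transpose * sympForm n + sympForm n * X = 0 ∧ ∀ i j, j < i → X i j = 0}

/-- Abelian Lie ideals of `𝔟`: complex subspaces `𝔞 ⊆ 𝔟` with `⁅𝔟,𝔞⁆ ⊆ 𝔞` and `⁅𝔞,𝔞⁆ = 0`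
(the bracket of matrices being `⁅X,Y⁆ = X·Y − Y·X`). -/
def abelianIdealsSp (n : ℕ) : Set (Submodule ℂ (Matrix (Fin (2 * n)) (Fin (2 * n)) ℂ)) :=
  {a | (a : Set (Matrix (Fin (2 * n)) (Fin (2 * n)) ℂ)) ⊆ borelSp n ∧
       (∀ X ∈ borelSp n, ∀ Y ∈ a, X * Y - Y * X ∈ a) ∧
       (∀ X ∈ a, ∀ Y ∈ a, X * Y - Y * X = 0)}

namespace Stmt14

open Matrix Finset

abbrev Mat (n : ℕ) := Matrix (Fin (2*n)) (Fin (2*n)) ℂ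

variable {n : ℕ}

noncomputable def sgn (n : ℕ) (i : Fin (2*n)) : ℂ := if (i:ℕ) < n then 1 else -1

noncomputable def tau (n : ℕ) (i j : Fin (2*n)) : ℂ := -(sgn n i * sgn n j)

lemma val_rev (i : Fin (2*n)) : (Fin.rev i : ℕ) = 2*n - 1 - (i:ℕ) := by
  rw [Fin.val_rev]; omega

lemma sgn_rev (i : Fin (2*n)) : sgn n (Fin.rev i) = -sgn n i := by
  have h := i.is_lt
  simp only [sgn, val_rev]
  by_cases hi : (i:ℕ) < n
  · rw [if_neg (by omega), if_pos hi]
  · rw [if_pos (by omega), if_neg hi]; ring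

lemma sgn_mul_self (i : Fin (2*n)) : sgn n i * sgn n i = 1 := by
  simp only [sgn]; split <;> ring

lemma sgn_ne_zero (i : Fin (2*n)) : sgn n i ≠ 0 := by
  simp only [sgn]; split <;> norm_num

lemma tau_mul_self (i j : Fin (2*n)) : tau n i j * tau n i j = 1 := by
  simp only [tau]
  linear_combination (sgn n j * sgn n j) * (sgn_mul_self i) + sgn_mul_self j

lemma tau_rev (i j : Fin (2*n)) : tau n (Fin.rev j) (Fin.rev i) = tau n i j := by
  simp only [tau, sgn_rev]; ring

/-- the `gEq` (symplectic-membership) predicate in pairing form -/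
def gEq (n : ℕ) (X : Mat n) : Prop :=
  ∀ i j : Fin (2*n), X (Fin.rev j) (Fin.rev i) = tau n i j * X i j

lemma sympForm_apply (i j : Fin (2*n)) :
    sympForm n i j = if (i:ℕ) + (j:ℕ) = 2*n - 1 then sgn n i else 0 := by
  simp [sympForm, sgn]

lemma entry_eq (X : Mat n) (i j : Fin (2*n)) :
    (X.transpose * sympForm n + sympForm n * X) i j
      = sgn n (Fin.rev j) * X (Fin.rev j) i + sgn n i * X (Fin.rev i) j := by
  have h2 : (sympForm n * X) i j = sgn n i * X (Fin.rev i) j := by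
    rw [Matrix.mul_apply]
    rw [Finset.sum_eq_single (Fin.rev i)]
    · rw [sympForm_apply]
      have : (i:ℕ) + (Fin.rev i : ℕ) = 2*n-1 := by
        have := i.is_lt; rw [val_rev]; omega
      rw [if_pos this]
    · intro b _ hb
      rw [sympForm_apply]
      have : ¬ ((i:ℕ) + (b:ℕ) = 2*n-1) := by
        intro hc
        apply hb
        have := i.is_lt; have := b.is_lt
        apply Fin.ext; rw [val_rev]; omega
      rw [if_neg this, zero_mul]
    · intro h; exact absurd (Finset.mem_univ _) h
  have h1 : (X.transpose * sympForm n) i j = sgn n (Fin.rev j) * X (Fin.rev j) i := by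
    rw [Matrix.mul_apply]
    rw [Finset.sum_eq_single (Fin.rev j)]
    · rw [Matrix.transpose_apply, sympForm_apply]
      have : (Fin.rev j:ℕ) + (j : ℕ) = 2*n-1 := by
        have := j.is_lt; rw [val_rev]; omega
      rw [if_pos this]; ring
    · intro b _ hb
      rw [Matrix.transpose_apply, sympForm_apply]
      have : ¬ ((b:ℕ) + (j:ℕ) = 2*n-1) := by
        intro hc
        apply hb
        have := j.is_lt; have := b.is_lt
        apply Fin.ext; rw [val_rev]; omega
      rw [if_neg this, mul_zero]
    · intro h; exact absurd (Finset.mem_univ _) h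
  rw [Matrix.add_apply, h1, h2]

lemma gEq_iff (X : Mat n) :
    X.transpose * sympForm n + sympForm n * X = 0 ↔ gEq n X := by
  constructor
  · intro h i j
    have e := congrFun (congrFun h (Fin.rev i)) j
    rw [entry_eq, Matrix.zero_apply, Fin.rev_rev] at e
    rw [sgn_rev, sgn_rev] at e
    rw [tau]
    linear_combination (-(sgn n j)) * e - (X (Fin.rev j) (Fin.rev i)) * (sgn_mul_self j)
  · intro h
    ext i j
    rw [entry_eq, Matrix.zero_apply]
    have h1 := h (Fin.rev i) j
    rw [Fin.rev_rev] at h1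
    rw [tau, sgn_rev] at h1
    rw [sgn_rev]
    linear_combination (-(sgn n j)) * h1 - (sgn n i * X (Fin.rev i) j) * (sgn_mul_self j)


/-! ### Root matrices -/

noncomputable def E (n : ℕ) (i j : Fin (2*n)) : Mat n := Matrix.single i j 1

noncomputable def Mm (n : ℕ) (i j : Fin (2*n)) : Mat n :=
  E n i j + tau n i j • E n (Fin.rev j) (Fin.rev i)

lemma rev_eq_comm {x y : Fin (2*n)} : Fin.rev x = y ↔ x = Fin.rev y := by
  constructor <;> (rintro rfl; rw [Fin.rev_rev])

lemma Mm_apply (i j a b : Fin (2*n)) :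
    Mm n i j a b = (if i = a ∧ j = b then 1 else 0)
      + tau n i j * (if Fin.rev j = a ∧ Fin.rev i = b then (1:ℂ) else 0) := by
  simp [Mm, E, Matrix.single, Matrix.add_apply, Matrix.smul_apply, Matrix.of_apply]

lemma gEq_Mm (i j : Fin (2*n)) : gEq n (Mm n i j) := by
  intro a b
  rw [Mm_apply, Mm_apply]
  have c1 : (i = Fin.rev b ∧ j = Fin.rev a) ↔ (Fin.rev j = a ∧ Fin.rev i = b) := by
    constructor <;> rintro ⟨rfl, rfl⟩ <;> simp [Fin.rev_rev]
  have c2 : (Fin.rev j = Fin.rev b ∧ Fin.rev i = Fin.rev a) ↔ (i = a ∧ j = b) := by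
    rw [Fin.rev_inj, Fin.rev_inj, and_comm]
  rw [if_congr c1 rfl rfl, if_congr c2 rfl rfl]
  by_cases h1 : i = a ∧ j = b <;> by_cases h2 : Fin.rev j = a ∧ Fin.rev i = b
  · rw [if_pos h1, if_pos h2]
    obtain ⟨rfl, rfl⟩ := h1
    linear_combination (-1 : ℂ) * tau_mul_self i j
  · rw [if_pos h1, if_neg h2]
    obtain ⟨rfl, rfl⟩ := h1
    ring
  · rw [if_neg h1, if_pos h2]
    obtain ⟨rfl, rfl⟩ := h2
    rw [tau_rev]
    linear_combination (-1 : ℂ) * tau_mul_self i j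
  · rw [if_neg h1, if_neg h2]; ring

lemma Mm_mem_borel {i j : Fin (2*n)} (h : i < j) : Mm n i j ∈ borelSp n := by
  constructor
  · exact (gEq_iff _).mpr (gEq_Mm i j)
  · intro a b hba
    rw [Mm_apply, if_neg, if_neg]
    · ring
    · rintro ⟨rfl, rfl⟩
      exact absurd hba (not_lt.mpr (le_of_lt ((Fin.rev_lt_rev).mpr h)))
    · rintro ⟨rfl, rfl⟩
      exact absurd hba (not_lt.mpr (le_of_lt h))

lemma diag_mem_borel (d : Fin (2*n) → ℂ) (hd : ∀ i, d (Fin.rev i) = -d i) :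
    Matrix.diagonal d ∈ borelSp n := by
  constructor
  · apply (gEq_iff _).mpr
    intro i j
    by_cases hij : i = j
    · subst hij
      rw [Matrix.diagonal_apply_eq, Matrix.diagonal_apply_eq, hd, tau]
      linear_combination (d i) * sgn_mul_self i
    · rw [Matrix.diagonal_apply_ne _ (fun hc => hij (Fin.rev_inj.mp hc.symm)),
        Matrix.diagonal_apply_ne _ hij]
      ring
  · intro a b hba
    exact Matrix.diagonal_apply_ne _ (ne_of_gt hba)

lemma E_mul_E_same {j k : Fin (2*n)} (i l : Fin (2*n)) (h : j = k) :
    E n i j * E n k l = E n i l := by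
  subst h
  rw [E, E, E, Matrix.single_mul_single_same, mul_one]

lemma E_mul_E_ne {j k : Fin (2*n)} (i l : Fin (2*n)) (h : j ≠ k) :
    E n i j * E n k l = 0 := by
  rw [E, E, Matrix.single_mul_single_of_ne _ _ _ _ h]


/-! ### Arithmetic: signed powers of 4 -/

lemma pow4_single {s t : ℤ} (hs : s = 1 ∨ s = -1) (ht : t = 1 ∨ t = -1)
    {a b : ℕ} (h : s * 4^a = t * 4^b) : s = t ∧ a = b := by
  have ha : (0:ℤ) < 4^a := pow_pos (by norm_num) a
  have hb : (0:ℤ) < 4^b := pow_pos (by norm_num) b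
  have hab : (4:ℤ)^a = 4^b := by
    rcases hs with rfl|rfl <;> rcases ht with rfl|rfl <;> omega
  have hab2 : a = b := by
    have hc : (4:ℕ)^a = 4^b := by exact_mod_cast hab
    exact Nat.pow_right_injective (by norm_num) hc
  subst hab2
  exact ⟨mul_right_cancel₀ (ne_of_gt ha) h, rfl⟩

lemma pow4_zero {s t : ℤ} (hs : s = 1 ∨ s = -1) (ht : t = 1 ∨ t = -1)
    {a b : ℕ} (h : s * 4^a + t * 4^b = 0) : a = b ∧ t = -s := by
  have h' : s * 4^a = (-t) * 4^b := by linarith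
  have hnt : -t = 1 ∨ -t = -1 := by omega
  obtain ⟨h1, h2⟩ := pow4_single hs hnt h'
  exact ⟨h2, by omega⟩

lemma pow4_L2 {s t u v : ℤ} (hs : s = 1 ∨ s = -1) (ht : t = 1 ∨ t = -1)
    (hu : u = 1 ∨ u = -1) (hv : v = 1 ∨ v = -1) {b d : ℕ}
    (heq : s + t * 4^(b+1) = u + v * 4^(d+1)) : s = u ∧ t = v ∧ b = d := by
  have hb : (0:ℤ) < 4^b := pow_pos (by norm_num) b
  have hd' : (0:ℤ) < 4^d := pow_pos (by norm_num) d
  rw [pow_succ, pow_succ] at heq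
  have hsu : s = u := by
    rcases hs with rfl|rfl <;> rcases ht with rfl|rfl <;> rcases hu with rfl|rfl <;>
      rcases hv with rfl|rfl <;> omega
  subst hsu
  have h2 : t * 4^(b+1) = v * 4^(d+1) := by
    rw [pow_succ, pow_succ]; linarith
  obtain ⟨h3, h4⟩ := pow4_single ht hv h2
  exact ⟨rfl, h3, by omega⟩

lemma pow4_core (Nf : ℕ) : ∀ (a b c d : ℕ), a+b+c+d ≤ Nf → ∀ s t u v : ℤ,
    (s = 1 ∨ s = -1) → (t = 1 ∨ t = -1) → (u = 1 ∨ u = -1) → (v = 1 ∨ v = -1) →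
    s*4^a + t*4^b = u*4^c + v*4^d →
    ((s = u ∧ a = c) ∧ (t = v ∧ b = d)) ∨ ((s = v ∧ a = d) ∧ (t = u ∧ b = c)) ∨
    (s*4^a + t*4^b = 0) := by
  induction Nf with
  | zero =>
    intro a b c d hN s t u v hs ht hu hv heq
    have ha : a = 0 := by omega
    have hb : b = 0 := by omega
    have hc : c = 0 := by omega
    have hd : d = 0 := by omega
    subst ha; subst hb; subst hc; subst hd
    simp only [pow_zero, mul_one, and_true, true_and] at heq ⊢
    rcases hs with rfl|rfl <;> rcases ht with rfl|rfl <;> rcases hu with rfl|rfl <;>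
      rcases hv with rfl|rfl <;> omega
  | succ Nf ih =>
    intro a b c d hN s t u v hs ht hu hv heq
    have pa : (0:ℤ) < 4^a := pow_pos (by norm_num) a
    have pb : (0:ℤ) < 4^b := pow_pos (by norm_num) b
    have pc : (0:ℤ) < 4^c := pow_pos (by norm_num) c
    have pd : (0:ℤ) < 4^d := pow_pos (by norm_num) d
    rcases a with _|a <;> rcases b with _|b <;> rcases c with _|c <;> rcases d with _|d
    -- (0,0,0,0)
    · simp only [pow_zero, mul_one, and_true, true_and] at heq ⊢
      rcases hs with rfl|rfl <;> rcases ht with rfl|rfl <;> rcases hu with rfl|rfl <;>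
        rcases hv with rfl|rfl <;> omega
    -- (0,0,0,+)
    · simp only [pow_zero, pow_succ, mul_one, and_true, true_and] at heq pd ⊢
      rcases hs with rfl|rfl <;> rcases ht with rfl|rfl <;> rcases hu with rfl|rfl <;>
        rcases hv with rfl|rfl <;> omega
    -- (0,0,+,0)
    · simp only [pow_zero, pow_succ, mul_one, and_true, true_and] at heq pc ⊢
      rcases hs with rfl|rfl <;> rcases ht with rfl|rfl <;> rcases hu with rfl|rfl <;>
        rcases hv with rfl|rfl <;> omega
    -- (0,0,+,+)
    · simp only [pow_zero, pow_succ, mul_one, and_true, true_and] at heq pc pd ⊢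
      rcases hs with rfl|rfl <;> rcases ht with rfl|rfl <;> rcases hu with rfl|rfl <;>
        rcases hv with rfl|rfl <;> omega
    -- (0,+,0,0)
    · simp only [pow_zero, pow_succ, mul_one, and_true, true_and] at heq pb ⊢
      rcases hs with rfl|rfl <;> rcases ht with rfl|rfl <;> rcases hu with rfl|rfl <;>
        rcases hv with rfl|rfl <;> omega
    -- (0,+,0,+)
    · simp only [pow_zero, mul_one, and_true, true_and] at heq ⊢
      obtain ⟨h1, h2, h3⟩ := pow4_L2 hs ht hu hv heq
      exact Or.inl ⟨h1, h2, by rw [h3]⟩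
    -- (0,+,+,0)
    · simp only [pow_zero, mul_one, and_true, true_and] at heq ⊢
      have heq2 : s + t * 4^(b+1) = v + u * 4^(c+1) := by linarith
      obtain ⟨h1, h2, h3⟩ := pow4_L2 hs ht hv hu heq2
      exact Or.inr (Or.inl ⟨h1, h2, by rw [h3]⟩)
    -- (0,+,+,+)
    · simp only [pow_zero, pow_succ, mul_one, and_true, true_and] at heq pb pc pd ⊢
      rcases hs with rfl|rfl <;> rcases ht with rfl|rfl <;> rcases hu with rfl|rfl <;>
        rcases hv with rfl|rfl <;> omega
    -- (+,0,0,0)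
    · simp only [pow_zero, pow_succ, mul_one, and_true, true_and] at heq pa ⊢
      rcases hs with rfl|rfl <;> rcases ht with rfl|rfl <;> rcases hu with rfl|rfl <;>
        rcases hv with rfl|rfl <;> omega
    -- (+,0,0,+)
    · simp only [pow_zero, mul_one, and_true, true_and] at heq ⊢
      have heq2 : t + s * 4^(a+1) = u + v * 4^(d+1) := by linarith
      obtain ⟨h1, h2, h3⟩ := pow4_L2 ht hs hu hv heq2
      exact Or.inr (Or.inl ⟨⟨h2, by rw [h3]⟩, h1⟩)
    -- (+,0,+,0)
    · simp only [pow_zero, mul_one, and_true, true_and] at heq ⊢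
      have heq2 : t + s * 4^(a+1) = v + u * 4^(c+1) := by linarith
      obtain ⟨h1, h2, h3⟩ := pow4_L2 ht hs hv hu heq2
      exact Or.inl ⟨⟨h2, by rw [h3]⟩, h1⟩
    -- (+,0,+,+)
    · simp only [pow_zero, pow_succ, mul_one, and_true, true_and] at heq pa pc pd ⊢
      rcases hs with rfl|rfl <;> rcases ht with rfl|rfl <;> rcases hu with rfl|rfl <;>
        rcases hv with rfl|rfl <;> omega
    -- (+,+,0,0)
    · simp only [pow_zero, pow_succ, mul_one, and_true, true_and] at heq pa pb ⊢
      rcases hs with rfl|rfl <;> rcases ht with rfl|rfl <;> rcases hu with rfl|rfl <;>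
        rcases hv with rfl|rfl <;> omega
    -- (+,+,0,+)
    · simp only [pow_zero, pow_succ, mul_one, and_true, true_and] at heq pa pb pd ⊢
      rcases hs with rfl|rfl <;> rcases ht with rfl|rfl <;> rcases hu with rfl|rfl <;>
        rcases hv with rfl|rfl <;> omega
    -- (+,+,+,0)
    · simp only [pow_zero, pow_succ, mul_one, and_true, true_and] at heq pa pb pc ⊢
      rcases hs with rfl|rfl <;> rcases ht with rfl|rfl <;> rcases hu with rfl|rfl <;>
        rcases hv with rfl|rfl <;> omega
    -- (+,+,+,+)
    · have h4 : (4:ℤ) * (s*4^a + t*4^b) = 4 * (u*4^c + v*4^d) := by linear_combination heq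
      have heq' : s*4^a + t*4^b = u*4^c + v*4^d := mul_left_cancel₀ (by norm_num) h4
      rcases ih a b c d (by omega) s t u v hs ht hu hv heq' with h|h|h
      · exact Or.inl ⟨⟨h.1.1, by rw [h.1.2]⟩, h.2.1, by rw [h.2.2]⟩
      · exact Or.inr (Or.inl ⟨⟨h.1.1, by rw [h.1.2]⟩, h.2.1, by rw [h.2.2]⟩)
      · exact Or.inr (Or.inr (by linear_combination 4 * h))

/-! ### Weights -/

def expo (n : ℕ) (i : Fin (2*n)) : ℕ := if (i:ℕ) < n then n - (i:ℕ) else (i:ℕ) - n + 1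

def sgnI (n : ℕ) (i : Fin (2*n)) : ℤ := if (i:ℕ) < n then 1 else -1

def hInt (n : ℕ) (i : Fin (2*n)) : ℤ := sgnI n i * 4^(expo n i)

lemma sgnI_pm (i : Fin (2*n)) : sgnI n i = 1 ∨ sgnI n i = -1 := by
  unfold sgnI; split <;> simp

lemma expo_rev (i : Fin (2*n)) : expo n (Fin.rev i) = expo n i := by
  have := i.is_lt
  simp only [expo, val_rev]
  by_cases hi : (i:ℕ) < n
  · rw [if_neg (by omega), if_pos hi]; omega
  · rw [if_pos (by omega), if_neg hi]; omega

lemma sgnI_rev (i : Fin (2*n)) : sgnI n (Fin.rev i) = -sgnI n i := by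
  have := i.is_lt
  simp only [sgnI, val_rev]
  by_cases hi : (i:ℕ) < n
  · rw [if_neg (by omega), if_pos hi]
  · rw [if_pos (by omega), if_neg hi]; omega

lemma hInt_rev (i : Fin (2*n)) : hInt n (Fin.rev i) = -hInt n i := by
  rw [hInt, hInt, expo_rev, sgnI_rev]; ring

lemma sgnI_expo_inj {i j : Fin (2*n)} (h1 : sgnI n i = sgnI n j)
    (h2 : expo n i = expo n j) : i = j := by
  have hi := i.is_lt; have hj := j.is_lt
  apply Fin.ext
  simp only [sgnI, expo] at h1 h2
  split_ifs at h1 h2 <;> omega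

lemma hInt_inj {i j : Fin (2*n)} (h : hInt n i = hInt n j) : i = j := by
  rw [hInt, hInt] at h
  obtain ⟨h1, h2⟩ := pow4_single (sgnI_pm i) (sgnI_pm j) h
  exact sgnI_expo_inj h1 h2

lemma keyC {x y x' y' : Fin (2*n)} (h : hInt n x + hInt n y = hInt n x' + hInt n y') :
    (x = x' ∧ y = y') ∨ (x = y' ∧ y = x') ∨ (y = Fin.rev x ∧ y' = Fin.rev x') := by
  rw [hInt, hInt, hInt, hInt] at h
  rcases pow4_core (expo n x + expo n y + expo n x' + expo n y') _ _ _ _ le_rfl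
    _ _ _ _ (sgnI_pm x) (sgnI_pm y) (sgnI_pm x') (sgnI_pm y') h with hh|hh|hh
  · exact Or.inl ⟨sgnI_expo_inj hh.1.1 hh.1.2, sgnI_expo_inj hh.2.1 hh.2.2⟩
  · exact Or.inr (Or.inl ⟨sgnI_expo_inj hh.1.1 hh.1.2, sgnI_expo_inj hh.2.1 hh.2.2⟩)
  · right; right
    obtain ⟨z1, z2⟩ := pow4_zero (sgnI_pm x) (sgnI_pm y) hh
    have hy : y = Fin.rev x := by
      apply sgnI_expo_inj (by rw [sgnI_rev]; omega) (by rw [expo_rev]; omega)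
    have hh' : sgnI n x' * 4^(expo n x') + sgnI n y' * 4^(expo n y') = 0 := by
      rw [← h]; exact hh
    obtain ⟨z1', z2'⟩ := pow4_zero (sgnI_pm x') (sgnI_pm y') hh'
    have hy' : y' = Fin.rev x' := by
      apply sgnI_expo_inj (by rw [sgnI_rev]; omega) (by rw [expo_rev]; omega)
    exact ⟨hy, hy'⟩

def wgt (n : ℕ) (i j : Fin (2*n)) : ℤ := hInt n i - hInt n j

lemma wgt_inj {i j i' j' : Fin (2*n)} (h : wgt n i j = wgt n i' j') :
    (i = i' ∧ j = j') ∨ (i' = Fin.rev j ∧ j' = Fin.rev i) ∨ (i = j ∧ i' = j') := by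
  have h2 : hInt n i + hInt n (Fin.rev j) = hInt n i' + hInt n (Fin.rev j') := by
    rw [hInt_rev, hInt_rev]
    unfold wgt at h; linarith
  rcases keyC h2 with hh|hh|hh
  · exact Or.inl ⟨hh.1, Fin.rev_inj.mp hh.2⟩
  · refine Or.inr (Or.inl ⟨hh.2.symm, ?_⟩)
    · rw [hh.1, Fin.rev_rev]
  · refine Or.inr (Or.inr ⟨?_, ?_⟩)
    · exact (Fin.rev_inj.mp hh.1).symm
    · exact (Fin.rev_inj.mp hh.2).symm
  
lemma wgt_zero_iff (i j : Fin (2*n)) : wgt n i j = 0 ↔ i = j := by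
  constructor
  · intro h
    exact hInt_inj (by unfold wgt at h; linarith)
  · rintro rfl; simp [wgt]


/-! ### Extraction of weight components -/

lemma smul_cancel_mem {V : Type*} [AddCommGroup V] [Module ℂ V] {a : Submodule ℂ V}
    {z : ℂ} (hz : z ≠ 0) {v : V} (h : z • v ∈ a) : v ∈ a := by
  have := Submodule.smul_mem a z⁻¹ h
  rwa [smul_smul, inv_mul_cancel₀ hz, one_smul] at this

lemma extract {V : Type*} [AddCommGroup V] [Module ℂ V] (a : Submodule ℂ V)
    (D : V →ₗ[ℂ] V) (hD : ∀ v ∈ a, D v ∈ a) :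
    ∀ (s : Finset ℤ) (v : ℤ → V), (∀ c ∈ s, D (v c) = (c:ℂ) • v c) →
      (∑ c ∈ s, v c) ∈ a → ∀ c ∈ s, v c ∈ a := by
  intro s
  induction s using Finset.induction_on with
  | empty => intro v _ _ c hc; simp at hc
  | insert c0 s hc0 ih =>
    intro v hv hsum c hc
    have h2 : D (∑ x ∈ insert c0 s, v x) - (c0:ℂ) • (∑ x ∈ insert c0 s, v x)
        = ∑ x ∈ s, (((x:ℂ) - (c0:ℂ)) • v x) := by
      rw [map_sum, Finset.smul_sum, ← Finset.sum_sub_distrib, Finset.sum_insert hc0]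
      rw [hv c0 (Finset.mem_insert_self _ _), sub_self, zero_add]
      apply Finset.sum_congr rfl
      intro x hx
      rw [hv x (Finset.mem_insert_of_mem hx), sub_smul]
    have hw : (∑ x ∈ s, (((x:ℂ) - (c0:ℂ)) • v x)) ∈ a := by
      rw [← h2]
      exact Submodule.sub_mem a (hD _ hsum) (Submodule.smul_mem a _ hsum)
    have hvs : ∀ x ∈ s, v x ∈ a := by
      intro x hx
      have hne : ((x:ℂ) - (c0:ℂ)) ≠ 0 := by
        intro hcon
        have h1 : (x:ℂ) = (c0:ℂ) := by linear_combination hcon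
        have h1' : x = c0 := by exact_mod_cast h1
        exact hc0 (h1' ▸ hx)
      apply smul_cancel_mem hne
      exact ih (fun y => ((y:ℂ) - (c0:ℂ)) • v y)
        (fun y hy => by
          rw [_root_.map_smul, hv y (Finset.mem_insert_of_mem hy), smul_smul, smul_smul, mul_comm])
        hw x hx
    rcases Finset.mem_insert.mp hc with rfl|hcs
    · have : v c = (∑ x ∈ insert c s, v x) - ∑ x ∈ s, v x := by
        rw [Finset.sum_insert hc0]; abel
      rw [this]
      exact Submodule.sub_mem a hsum (Submodule.sum_mem a hvs)
    · exact hvs c hcs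

noncomputable def Hmat (n : ℕ) : Mat n := Matrix.diagonal (fun i => (hInt n i : ℂ))

lemma Hmat_mem_borel : Hmat n ∈ borelSp n := by
  apply diag_mem_borel
  intro i
  rw [hInt_rev]
  push_cast
  ring

noncomputable def comp (n : ℕ) (Y : Mat n) (c : ℤ) : Mat n :=
  Matrix.of fun i j => if wgt n i j = c then Y i j else 0

lemma comp_mem {a : Submodule ℂ (Mat n)} (ha : a ∈ abelianIdealsSp n) {Y : Mat n}
    (hY : Y ∈ a) (c : ℤ) : comp n Y c ∈ a := by
  classical
  set s : Finset ℤ :=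
    Finset.image (fun p : Fin (2*n) × Fin (2*n) => wgt n p.1 p.2) Finset.univ with hs
  by_cases hcs : c ∈ s
  · set D : Mat n →ₗ[ℂ] Mat n :=
      LinearMap.mulLeft ℂ (Hmat n) - LinearMap.mulRight ℂ (Hmat n) with hDdef
    have hD : ∀ v ∈ a, D v ∈ a := by
      intro v hv
      have := ha.2.1 _ (Hmat_mem_borel) v hv
      simpa [hDdef, LinearMap.sub_apply] using this
    have heig : ∀ c' ∈ s, D (comp n Y c') = (c':ℂ) • comp n Y c' := by
      intro c' _
      ext i j
      simp only [hDdef, LinearMap.sub_apply, LinearMap.mulLeft_apply,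
        LinearMap.mulRight_apply, Matrix.sub_apply, Hmat, Matrix.diagonal_mul,
        Matrix.mul_diagonal, Matrix.smul_apply, comp, Matrix.of_apply, smul_eq_mul]
      by_cases hw : wgt n i j = c'
      · rw [if_pos hw]
        have hcast : (hInt n i : ℂ) - (hInt n j : ℂ) = (c' : ℂ) := by
          rw [← hw]; unfold wgt; push_cast; ring
        linear_combination (Y i j) * hcast
      · rw [if_neg hw]; ring
    have hsum : (∑ c' ∈ s, comp n Y c') = Y := by
      ext i j
      rw [Matrix.sum_apply]
      have : ∀ c' ∈ s, (comp n Y c') i j = if wgt n i j = c' then Y i j else 0 := by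
        intro c' _; rfl
      rw [Finset.sum_congr rfl this, Finset.sum_ite_eq s (wgt n i j) (fun _ => Y i j)]
      rw [if_pos]
      rw [hs]
      exact Finset.mem_image.mpr ⟨(i, j), Finset.mem_univ _, rfl⟩
    exact extract a D hD s (comp n Y) heig (by rw [hsum]; exact hY) c hcs
  · have : comp n Y c = 0 := by
      ext i j
      simp only [comp, Matrix.of_apply, Matrix.zero_apply]
      rw [if_neg]
      intro hw
      exact hcs (hs ▸ Finset.mem_image.mpr ⟨(i, j), Finset.mem_univ _, hw⟩)
    rw [this]
    exact Submodule.zero_mem a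


/-! ### Entry lemmas for products -/

lemma E_apply (i j a b : Fin (2*n)) : E n i j a b = if i = a ∧ j = b then (1:ℂ) else 0 := by
  simp [E, Matrix.single]

lemma tau_ne_zero (i j : Fin (2*n)) : tau n i j ≠ 0 := by
  intro h
  rw [tau, neg_eq_zero, mul_eq_zero] at h
  rcases h with h|h
  · exact sgn_ne_zero i h
  · exact sgn_ne_zero j h

lemma tau_rev_self (p : Fin (2*n)) : tau n p (Fin.rev p) = 1 := by
  rw [tau, sgn_rev]
  linear_combination sgn_mul_self p

lemma tau_block {i j : Fin (2*n)} (hi : (i:ℕ) < n) (hj : n ≤ (j:ℕ)) : tau n i j = 1 := by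
  rw [tau, sgn, sgn, if_pos hi, if_neg (not_lt.mpr hj)]
  ring

lemma tau_low {i j : Fin (2*n)} (hi : (i:ℕ) < n) (hj : (j:ℕ) < n) : tau n i j = -1 := by
  rw [tau, sgn, sgn, if_pos hi, if_pos hj]
  ring

lemma sum_ind' (q p y : Fin (2*n)) (f : Fin (2*n) → ℂ) :
    (∑ k, (if q = k ∧ p = y then (1:ℂ) else 0) * f k) = if p = y then f q else 0 := by
  by_cases hpy : p = y
  · rw [if_pos hpy, Finset.sum_eq_single q]
    · rw [if_pos ⟨rfl, hpy⟩, one_mul]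
    · intro b _ hb; rw [if_neg (fun hh => hb hh.1.symm), zero_mul]
    · intro h; exact absurd (Finset.mem_univ q) h
  · rw [if_neg hpy]
    apply Finset.sum_eq_zero
    intro k _; rw [if_neg (fun hh => hpy hh.2), zero_mul]

lemma sum_ind (p q x : Fin (2*n)) (f : Fin (2*n) → ℂ) :
    (∑ k, (if p = x ∧ q = k then (1:ℂ) else 0) * f k) = if p = x then f q else 0 := by
  by_cases hpx : p = x
  · rw [if_pos hpx, Finset.sum_eq_single q]
    · rw [if_pos ⟨hpx, rfl⟩, one_mul]
    · intro b _ hb; rw [if_neg (fun hh => hb hh.2.symm), zero_mul]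
    · intro h; exact absurd (Finset.mem_univ q) h
  · rw [if_neg hpx]
    apply Finset.sum_eq_zero
    intro k _; rw [if_neg (fun hh => hpx hh.1), zero_mul]

lemma Mm_mul_apply (i j : Fin (2*n)) (Z : Mat n) (x y : Fin (2*n)) :
    (Mm n i j * Z) x y = (if i = x then Z j y else 0)
      + tau n i j * (if Fin.rev j = x then Z (Fin.rev i) y else 0) := by
  rw [Matrix.mul_apply]
  have h1 : ∀ k, Mm n i j x k * Z k y
      = (if i = x ∧ j = k then (1:ℂ) else 0) * Z k y
        + tau n i j * ((if Fin.rev j = x ∧ Fin.rev i = k then (1:ℂ) else 0) * Z k y) := by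
    intro k; rw [Mm_apply]; ring
  rw [Finset.sum_congr rfl fun k _ => h1 k, Finset.sum_add_distrib, ← Finset.mul_sum,
    sum_ind, sum_ind]

lemma mul_Mm_apply (i j : Fin (2*n)) (Z : Mat n) (x y : Fin (2*n)) :
    (Z * Mm n i j) x y = (if j = y then Z x i else 0)
      + tau n i j * (if Fin.rev i = y then Z x (Fin.rev j) else 0) := by
  rw [Matrix.mul_apply]
  have h1 : ∀ k, Z x k * Mm n i j k y
      = (if i = k ∧ j = y then (1:ℂ) else 0) * Z x k
        + tau n i j * ((if Fin.rev j = k ∧ Fin.rev i = y then (1:ℂ) else 0) * Z x k) := by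
    intro k
    rw [Mm_apply]
    ring
  rw [Finset.sum_congr rfl fun k _ => h1 k, Finset.sum_add_distrib, ← Finset.mul_sum,
    sum_ind', sum_ind']

lemma diagish_mul {δ : Mat n} (hd : ∀ i j, i ≠ j → δ i j = 0) (Z : Mat n)
    (x y : Fin (2*n)) : (δ * Z) x y = δ x x * Z x y := by
  rw [Matrix.mul_apply, Finset.sum_eq_single x]
  · intro b _ hb; rw [hd x b (fun hh => hb hh.symm), zero_mul]
  · intro h; exact absurd (Finset.mem_univ x) h

lemma mul_diagish {δ : Mat n} (hd : ∀ i j, i ≠ j → δ i j = 0) (Z : Mat n)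
    (x y : Fin (2*n)) : (Z * δ) x y = Z x y * δ y y := by
  rw [Matrix.mul_apply, Finset.sum_eq_single y]
  · intro b _ hb; rw [hd b y hb, mul_zero]
  · intro h; exact absurd (Finset.mem_univ y) h

/-! ### The zero-weight component vanishes -/

lemma comp_zero_eq_zero {a : Submodule ℂ (Mat n)} (ha : a ∈ abelianIdealsSp n)
    {Y : Mat n} (hY : Y ∈ a) : comp n Y 0 = 0 := by
  classical
  have hδ : comp n Y 0 ∈ a := comp_mem ha hY 0
  set δ := comp n Y 0 with hδdef
  have hδdiag : ∀ i j : Fin (2*n), i ≠ j → δ i j = 0 := by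
    intro i j hij
    simp only [hδdef, comp, Matrix.of_apply]
    rw [if_neg (fun hw => hij ((wgt_zero_iff i j).mp hw))]
  have hδsame : ∀ p : Fin (2*n), δ p p = Y p p := by
    intro p
    simp only [hδdef, comp, Matrix.of_apply]
    have h0 : wgt n p p = 0 := sub_self _
    rw [if_pos h0]
  have hg : gEq n Y := (gEq_iff Y).mp (ha.1 hY).1
  have hrev : ∀ p : Fin (2*n), Y (Fin.rev p) (Fin.rev p) = -(Y p p) := by
    intro p
    have h1 := hg p p
    rw [tau] at h1
    linear_combination h1 - (Y p p) * sgn_mul_self p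
  have hmain : ∀ p : Fin (2*n), (p:ℕ) < n → Y p p = 0 := by
    intro p hp
    have hpr : p < Fin.rev p := by rw [Fin.lt_def, val_rev]; have := p.is_lt; omega
    have hMb : Mm n p (Fin.rev p) ∈ borelSp n := Mm_mem_borel hpr
    have hWa : Mm n p (Fin.rev p) * δ - δ * Mm n p (Fin.rev p) ∈ a := ha.2.1 _ hMb _ hδ
    have habel := ha.2.2 _ hδ _ hWa
    set W := Mm n p (Fin.rev p) * δ - δ * Mm n p (Fin.rev p) with hWdef
    have hMval : Mm n p (Fin.rev p) p (Fin.rev p) = 2 := by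
      rw [Mm_apply, if_pos ⟨rfl, rfl⟩, if_pos ⟨Fin.rev_rev p, rfl⟩, tau_rev_self]
      norm_num
    have hWval : W p (Fin.rev p) = -4 * Y p p := by
      rw [hWdef, Matrix.sub_apply, mul_diagish hδdiag, diagish_mul hδdiag,
        hδsame, hδsame, hrev, hMval]
      ring
    have hE := congrFun (congrFun habel p) (Fin.rev p)
    rw [Matrix.sub_apply, diagish_mul hδdiag, mul_diagish hδdiag, hδsame, hδsame, hrev,
      hWval, Matrix.zero_apply] at hE
    have : Y p p * Y p p = 0 := by linear_combination (-1/8 : ℂ) * hE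
    exact mul_self_eq_zero.mp this
  ext i j
  rw [Matrix.zero_apply]
  by_cases hij : i = j
  · subst hij
    rw [hδsame]
    by_cases hi : (i:ℕ) < n
    · exact hmain i hi
    · have h2 : ((Fin.rev i):ℕ) < n := by rw [val_rev]; have := i.is_lt; omega
      have hr := hrev i
      rw [hmain (Fin.rev i) h2] at hr
      linear_combination hr
  · exact hδdiag i j hij


/-! ### Extracting root matrices from ideal members -/

lemma getM {a : Submodule ℂ (Mat n)} (ha : a ∈ abelianIdealsSp n) {Y : Mat n}
    (hY : Y ∈ a) {i j : Fin (2*n)} (hij : i < j) (hne : Y i j ≠ 0) : Mm n i j ∈ a := by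
  classical
  have hg : gEq n Y := (gEq_iff Y).mp (ha.1 hY).1
  have hZ : comp n Y (wgt n i j) ∈ a := comp_mem ha hY _
  have hijne : i ≠ j := ne_of_lt hij
  by_cases hself : Fin.rev j = i
  · have h2 : Fin.rev i = j := by rw [← hself, Fin.rev_rev]
    have hQ : comp n Y (wgt n i j) = Y i j • E n i j := by
      ext x y
      simp only [comp, Matrix.of_apply, Matrix.smul_apply, E_apply, smul_eq_mul]
      by_cases hw : wgt n x y = wgt n i j
      · rcases wgt_inj hw.symm with ⟨rfl, rfl⟩|⟨rfl, rfl⟩|⟨hij', _⟩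
        · rw [if_pos hw, if_pos ⟨rfl, rfl⟩, mul_one]
        · rw [if_pos hw, hself, h2, if_pos ⟨rfl, rfl⟩, mul_one]
        · exact absurd hij' hijne
      · rw [if_neg hw, if_neg, mul_zero]
        rintro ⟨rfl, rfl⟩
        exact hw rfl
    have hEa : E n i j ∈ a := smul_cancel_mem hne (hQ ▸ hZ)
    have h3 : Mm n i j = E n i j + tau n i j • E n i j := by rw [Mm, hself, h2]
    rw [h3]
    exact Submodule.add_mem a hEa (Submodule.smul_mem a _ hEa)
  · have hQ : comp n Y (wgt n i j) = Y i j • Mm n i j := by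
      ext x y
      simp only [comp, Matrix.of_apply, Matrix.smul_apply, Mm_apply, smul_eq_mul]
      by_cases hw : wgt n x y = wgt n i j
      · rcases wgt_inj hw.symm with ⟨rfl, rfl⟩|⟨rfl, rfl⟩|⟨hij', _⟩
        · rw [if_pos hw, if_pos ⟨rfl, rfl⟩, if_neg (fun hh => hself hh.1)]
          ring
        · rw [if_pos hw, if_neg (fun hh => hself (by rw [hh.1])),
            if_pos ⟨rfl, rfl⟩, hg i j]
          ring
        · exact absurd hij' hijne
      · have hn1 : ¬(i = x ∧ j = y) := fun hh => hw (by rw [← hh.1, ← hh.2])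
        have hn2 : ¬(Fin.rev j = x ∧ Fin.rev i = y) := by
          rintro ⟨rfl, rfl⟩
          apply hw
          unfold wgt
          rw [hInt_rev, hInt_rev]
          ring
        rw [if_neg hw, if_neg hn1, if_neg hn2]
        ring
    exact smul_cancel_mem hne (hQ ▸ hZ)

lemma caseA {a : Submodule ℂ (Mat n)} (ha : a ∈ abelianIdealsSp n) {Y : Mat n}
    (hY : Y ∈ a) {i j : Fin (2*n)} (hij : i < j) (hjn : (j:ℕ) < n)
    (hne : Y i j ≠ 0) : False := by
  have hvij := Fin.lt_def.mp hij
  have hjlt := j.is_lt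
  have hilt := i.is_lt
  have hM : Mm n i j ∈ a := getM ha hY hij hne
  have hjr : j < Fin.rev j := by rw [Fin.lt_def, val_rev]; omega
  have hT : Mm n j (Fin.rev j) ∈ borelSp n := Mm_mem_borel hjr
  have hWa : Mm n j (Fin.rev j) * Mm n i j - Mm n i j * Mm n j (Fin.rev j) ∈ a :=
    ha.2.1 _ hT _ hM
  have habel := ha.2.2 _ hM _ hWa
  set W := Mm n j (Fin.rev j) * Mm n i j - Mm n i j * Mm n j (Fin.rev j) with hWdef
  have hne1 : i ≠ j := ne_of_lt hij
  have hne2 : ¬ (Fin.rev j = i) := fun h => by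
    have := congrArg Fin.val h; rw [val_rev] at this; omega
  have hne5 : ¬ (j = Fin.rev i) := fun h => by
    have := congrArg Fin.val h; rw [val_rev] at this; omega
  have hMrjri : Mm n i j (Fin.rev j) (Fin.rev i) = tau n i j := by
    rw [Mm_apply, if_neg (fun hh => hne2 hh.1.symm), if_pos ⟨rfl, rfl⟩]
    ring
  have hMij : Mm n i j i j = 1 := by
    rw [Mm_apply, if_pos ⟨rfl, rfl⟩, if_neg (fun hh => hne2 hh.1)]
    ring
  have hWjri : W j (Fin.rev i) = 2 * tau n i j := by
    rw [hWdef, Matrix.sub_apply, Mm_mul_apply, mul_Mm_apply, Fin.rev_rev]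
    rw [if_pos (rfl : (j : Fin (2*n)) = j),
      if_neg (fun h : Fin.rev j = Fin.rev i => hne1 (Fin.rev_inj.mp h).symm),
      hMrjri, tau_rev_self]
    ring
  have hWirj : W i (Fin.rev j) = -2 := by
    rw [hWdef, Matrix.sub_apply, Mm_mul_apply, mul_Mm_apply, Fin.rev_rev]
    rw [if_neg (fun h : j = i => hne1 h.symm),
      if_pos (rfl : Fin.rev j = Fin.rev j), hMij, tau_rev_self]
    ring
  have hfin := congrFun (congrFun habel i) (Fin.rev i)
  rw [Matrix.sub_apply, Mm_mul_apply, mul_Mm_apply, if_pos (rfl : (i : Fin (2*n)) = i),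
    if_neg hne2, if_neg hne5, if_pos (rfl : Fin.rev i = Fin.rev i), hWjri, hWirj,
    Matrix.zero_apply] at hfin
  apply tau_ne_zero i j
  linear_combination (1/4 : ℂ) * hfin

lemma support_block {a : Submodule ℂ (Mat n)} (ha : a ∈ abelianIdealsSp n) {Y : Mat n}
    (hY : Y ∈ a) (i j : Fin (2*n)) (hne : Y i j ≠ 0) : (i:ℕ) < n ∧ n ≤ (j:ℕ) := by
  have hbor := ha.1 hY
  have hg : gEq n Y := (gEq_iff Y).mp hbor.1
  have hupper : ¬ (j < i) := fun h => hne (hbor.2 i j h)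
  have hdiag : i ≠ j := by
    intro h; subst h
    have h0 := comp_zero_eq_zero ha hY
    have h1 := congrFun (congrFun h0 i) i
    simp only [comp, Matrix.of_apply, Matrix.zero_apply] at h1
    have h2 : wgt n i i = 0 := sub_self _
    rw [if_pos h2] at h1
    exact hne h1
  have hij : i < j := lt_of_le_of_ne (not_lt.mp hupper) hdiag
  constructor
  · by_contra hc
    push_neg at hc
    have h1 : Fin.rev j < Fin.rev i := Fin.rev_lt_rev.mpr hij
    have h2 : ((Fin.rev i):ℕ) < n := by rw [val_rev]; have := i.is_lt; omega
    have h3 : Y (Fin.rev j) (Fin.rev i) ≠ 0 := by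
      rw [hg i j]
      exact mul_ne_zero (tau_ne_zero i j) hne
    exact caseA ha hY h1 h2 h3
  · by_contra hc
    push_neg at hc
    exact caseA ha hY hij hc hne

/-! ### Step lemmas -/

lemma step_row {a : Submodule ℂ (Mat n)} (ha : a ∈ abelianIdealsSp n)
    {i j i' : Fin (2*n)} (hM : Mm n i j ∈ a) (hi : (i:ℕ) < n) (hj : n ≤ (j:ℕ))
    (hle : i' ≤ i) : Mm n i' j ∈ a := by
  rcases eq_or_lt_of_le hle with heq|hlt
  · rwa [← heq] at hM
  · have hvij := Fin.lt_def.mp hlt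
    have hi' : (i':ℕ) < n := by omega
    have hjlt := j.is_lt
    have hBb : Mm n i' i ∈ borelSp n := Mm_mem_borel hlt
    have hWa : Mm n i' i * Mm n i j - Mm n i j * Mm n i' i ∈ a := ha.2.1 _ hBb _ hM
    set W := Mm n i' i * Mm n i j - Mm n i j * Mm n i' i with hWdef
    have hi'j : i' < j := by rw [Fin.lt_def]; omega
    apply getM ha hWa hi'j
    -- compute W i' j ≠ 0
    have hne1 : i' ≠ i := ne_of_lt hlt
    have hrii' : ¬ (Fin.rev i = i') := fun h => by
      have := congrArg Fin.val h; rw [val_rev] at this; omega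
    have hij' : ¬ ((i : Fin (2*n)) = j) := fun h => by
      have := congrArg Fin.val h; omega
    rw [hWdef, Matrix.sub_apply, Mm_mul_apply, mul_Mm_apply,
      if_pos (rfl : (i' : Fin (2*n)) = i'), if_neg hrii', if_neg hij']
    by_cases hsf : Fin.rev i' = j
    · have hMval : Mm n i j i' (Fin.rev i) = tau n i j := by
        rw [Mm_apply, if_neg (fun hh => hne1 hh.1.symm),
          if_pos ⟨by rw [← hsf, Fin.rev_rev], rfl⟩]
        ring
      have hnotself : ¬ (Fin.rev j = i ∧ Fin.rev i = j) := by
        rintro ⟨hh1, _⟩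
        exact hne1 (by rw [← hh1, ← hsf, Fin.rev_rev])
      have hMij1 : Mm n i j i j = 1 := by
        rw [Mm_apply, if_pos ⟨rfl, rfl⟩, if_neg hnotself]
        ring
      rw [if_pos hsf, hMval, hMij1, tau_low hi' hi, tau_block hi hj]
      norm_num
    · rw [if_neg hsf]
      have hMijn : Mm n i j i j ≠ 0 := by
        rw [Mm_apply, if_pos ⟨rfl, rfl⟩]
        by_cases hs : Fin.rev j = i ∧ Fin.rev i = j
        · rw [if_pos hs, tau_block hi hj]; norm_num
        · rw [if_neg hs]; norm_num
      intro hcon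
      apply hMijn
      have : Mm n i j i j + tau n i' i * 0 - (0 + tau n i' i * 0) = 0 := hcon
      linear_combination this

lemma Mm_rev_block {i j : Fin (2*n)} (hi : (i:ℕ) < n) (hj : n ≤ (j:ℕ)) :
    Mm n (Fin.rev j) (Fin.rev i) = Mm n i j := by
  rw [Mm, Mm, Fin.rev_rev, Fin.rev_rev, tau_rev, tau_block hi hj, one_smul, one_smul,
    add_comm]

lemma step_col {a : Submodule ℂ (Mat n)} (ha : a ∈ abelianIdealsSp n)
    {i j j' : Fin (2*n)} (hM : Mm n i j ∈ a) (hi : (i:ℕ) < n) (hj : n ≤ (j:ℕ))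
    (hle : j ≤ j') : Mm n i j' ∈ a := by
  have hj' : n ≤ (j':ℕ) := le_trans hj (Fin.le_def.mp hle)
  have h1 : Mm n (Fin.rev j) (Fin.rev i) ∈ a := by
    rw [Mm_rev_block hi hj]; exact hM
  have hjlt := j.is_lt
  have hilt := i.is_lt
  have h2 := step_row ha h1 (show ((Fin.rev j):ℕ) < n by rw [val_rev]; omega)
    (show n ≤ ((Fin.rev i):ℕ) by rw [val_rev]; omega) (Fin.rev_le_rev.mpr hle)
  rwa [Mm_rev_block hi hj'] at h2


/-! ### The ideal attached to a diagram -/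

def blockCond (n : ℕ) (D : Finset (ℕ × ℕ)) (i j : Fin (2*n)) : Prop :=
  (i:ℕ) < n ∧ n ≤ (j:ℕ) ∧ ((i:ℕ), 2*n-1-(j:ℕ)) ∈ D

noncomputable def aD (n : ℕ) (D : Finset (ℕ × ℕ)) : Submodule ℂ (Mat n) where
  carrier := {Y | (∀ i j, ¬ blockCond n D i j → Y i j = 0) ∧ gEq n Y}
  add_mem' := by
    rintro X Y ⟨hX1, hX2⟩ ⟨hY1, hY2⟩
    constructor
    · intro i j hc
      simp only [Matrix.add_apply, hX1 i j hc, hY1 i j hc, add_zero]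
    · intro i j
      simp only [Matrix.add_apply, hX2 i j, hY2 i j]
      ring
  zero_mem' := by
    constructor
    · intro i j _; rfl
    · intro i j; simp
  smul_mem' := by
    rintro c X ⟨hX1, hX2⟩
    constructor
    · intro i j hc
      simp only [Matrix.smul_apply, hX1 i j hc, smul_zero]
    · intro i j
      simp only [Matrix.smul_apply, hX2 i j, smul_eq_mul]
      ring

lemma mem_aD_iff {D : Finset (ℕ × ℕ)} {Y : Mat n} :
    Y ∈ aD n D ↔ (∀ i j, ¬ blockCond n D i j → Y i j = 0) ∧ gEq n Y := Iff.rfl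

def isSC (n : ℕ) (D : Finset (ℕ × ℕ)) : Prop :=
  (∀ q ∈ D, q.1 < n ∧ q.2 < n) ∧ (∀ q ∈ D, (q.2, q.1) ∈ D) ∧
  (∀ q ∈ D, ∀ p' u', p' ≤ q.1 → u' ≤ q.2 → (p', u') ∈ D)

lemma Mm_mem_aD {D : Finset (ℕ × ℕ)} (hSC : isSC n D) {i j : Fin (2*n)}
    (hi : (i:ℕ) < n) (hj : n ≤ (j:ℕ)) (hD : ((i:ℕ), 2*n-1-(j:ℕ)) ∈ D) :
    Mm n i j ∈ aD n D := by
  have hjlt := j.is_lt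
  have hilt := i.is_lt
  constructor
  · intro x y hc
    rw [Mm_apply, if_neg, if_neg]
    · ring
    · rintro ⟨rfl, rfl⟩
      apply hc
      refine ⟨by rw [val_rev]; omega, by rw [val_rev]; omega, ?_⟩
      have h1 : ((Fin.rev j : Fin (2*n)):ℕ) = 2*n-1-(j:ℕ) := val_rev j
      have h2 : 2*n-1-((Fin.rev i : Fin (2*n)):ℕ) = (i:ℕ) := by rw [val_rev]; omega
      rw [h1, h2]
      exact hSC.2.1 _ hD
    · rintro ⟨rfl, rfl⟩
      exact hc ⟨hi, hj, hD⟩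
  · exact gEq_Mm i j

lemma Mm_self_entry_ne {i j : Fin (2*n)} (hi : (i:ℕ) < n) (hj : n ≤ (j:ℕ)) :
    Mm n i j i j ≠ 0 := by
  rw [Mm_apply, if_pos ⟨rfl, rfl⟩]
  by_cases hs : Fin.rev j = i ∧ Fin.rev i = j
  · rw [if_pos hs, tau_block hi hj]; norm_num
  · rw [if_neg hs]; norm_num

lemma tau_mul_tau (i j m : Fin (2*n)) : tau n m j * tau n i m = -(tau n i j) := by
  simp only [tau]
  linear_combination (sgn n i * sgn n j) * sgn_mul_self m

lemma mul_rev_entry {X Y : Mat n} (hX : gEq n X) (hY : gEq n Y) (i j : Fin (2*n)) :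
    (X * Y) (Fin.rev j) (Fin.rev i) = -(tau n i j) * ((Y * X) i j) := by
  rw [Matrix.mul_apply, Matrix.mul_apply]
  rw [← Equiv.sum_comp (Fin.revPerm) (fun k => X (Fin.rev j) k * Y k (Fin.rev i))]
  have h1 : ∀ m : Fin (2*n),
      X (Fin.rev j) (Fin.revPerm m) * Y (Fin.revPerm m) (Fin.rev i)
        = -(tau n i j) * (Y i m * X m j) := by
    intro m
    have e1 : X (Fin.rev j) (Fin.rev m) = tau n m j * X m j := hX m j
    have e2 : Y (Fin.rev m) (Fin.rev i) = tau n i m * Y i m := hY i m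
    simp only [Fin.revPerm_apply]
    rw [e1, e2, ← tau_mul_tau i j m]
    ring
  rw [Finset.sum_congr rfl fun m _ => h1 m, ← Finset.mul_sum]

lemma gEq_bracket {X Y : Mat n} (hX : gEq n X) (hY : gEq n Y) :
    gEq n (X * Y - Y * X) := by
  intro i j
  rw [Matrix.sub_apply, Matrix.sub_apply, mul_rev_entry hX hY, mul_rev_entry hY hX]
  ring

lemma aD_subset_borel {D : Finset (ℕ × ℕ)} :
    (aD n D : Set (Mat n)) ⊆ borelSp n := by
  rintro Y ⟨hY1, hY2⟩
  refine ⟨(gEq_iff Y).mpr hY2, ?_⟩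
  intro i j hji
  apply hY1
  rintro ⟨hi, hj, _⟩
  have := Fin.lt_def.mp hji
  omega

lemma aD_mem_abelianIdeals {D : Finset (ℕ × ℕ)} (hSC : isSC n D) :
    aD n D ∈ abelianIdealsSp n := by
  refine ⟨aD_subset_borel, ?_, ?_⟩
  · -- ideal
    rintro X hX Y ⟨hY1, hY2⟩
    have hXg : gEq n X := (gEq_iff X).mp hX.1
    constructor
    · intro i j hc
      rw [Matrix.sub_apply, Matrix.mul_apply, Matrix.mul_apply]
      have t1 : ∀ k, X i k * Y k j = 0 := by
        intro k
        by_cases hXik : X i k = 0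
        · rw [hXik, zero_mul]
        · have hik : ¬ (k < i) := fun h => hXik (hX.2 i k h)
          rw [hY1 k j, mul_zero]
          rintro ⟨hk, hj, hD⟩
          apply hc
          have hik' : (i:ℕ) ≤ (k:ℕ) := by rw [Fin.lt_def] at hik; omega
          exact ⟨by omega, hj, hSC.2.2 _ hD (i:ℕ) (2*n-1-(j:ℕ)) hik' le_rfl⟩
      have t2 : ∀ k, Y i k * X k j = 0 := by
        intro k
        by_cases hXkj : X k j = 0
        · rw [hXkj, mul_zero]
        · have hkj : ¬ (j < k) := fun h => hXkj (hX.2 k j h)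
          rw [hY1 i k, zero_mul]
          rintro ⟨hi, hk, hD⟩
          apply hc
          have hjk : (k:ℕ) ≤ (j:ℕ) := by rw [Fin.lt_def] at hkj; omega
          have hjlt := j.is_lt
          exact ⟨hi, by omega, hSC.2.2 _ hD (i:ℕ) (2*n-1-(j:ℕ)) le_rfl (by omega)⟩
      rw [Finset.sum_eq_zero fun k _ => t1 k, Finset.sum_eq_zero fun k _ => t2 k,
        sub_zero]
    · exact gEq_bracket hXg hY2
  · -- abelian
    rintro X ⟨hX1, _⟩ Y ⟨hY1, _⟩
    have hmul : ∀ (U V : Mat n), (∀ i j, ¬ blockCond n D i j → U i j = 0) →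
        (∀ i j, ¬ blockCond n D i j → V i j = 0) → U * V = 0 := by
      intro U V hU hV
      ext i j
      rw [Matrix.mul_apply, Matrix.zero_apply]
      apply Finset.sum_eq_zero
      intro k _
      by_cases hUik : U i k = 0
      · rw [hUik, zero_mul]
      · have hk : n ≤ (k:ℕ) := by
          by_contra hkn
          exact hUik (hU i k (fun hb => hkn (by push_neg at hkn; exact absurd hb.2.1 (by omega))))
        rw [hV k j, mul_zero]
        rintro ⟨hk2, _, _⟩
        omega
    rw [hmul X Y hX1 hY1, hmul Y X hY1 hX1, sub_zero]


/-! ### The diagram of an ideal -/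

noncomputable def ent (n : ℕ) (Y : Mat n) (p u : ℕ) : ℂ :=
  if h : p < n ∧ u < n then Y ⟨p, by omega⟩ ⟨2*n-1-u, by omega⟩ else 0

open Classical in
noncomputable def Da (n : ℕ) (a : Submodule ℂ (Mat n)) : Finset (ℕ × ℕ) :=
  (Finset.range n ×ˢ Finset.range n).filter (fun q => ∃ Y ∈ a, ent n Y q.1 q.2 ≠ 0)

lemma mem_Da {a : Submodule ℂ (Mat n)} {p u : ℕ} :
    (p, u) ∈ Da n a ↔ (p < n ∧ u < n) ∧ ∃ Y ∈ a, ent n Y p u ≠ 0 := by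
  classical
  simp [Da, Finset.mem_filter, Finset.mem_product]

lemma ent_eq (Y : Mat n) (i j : Fin (2*n)) (hi : (i:ℕ) < n) (hj : n ≤ (j:ℕ)) :
    ent n Y (i:ℕ) (2*n-1-(j:ℕ)) = Y i j := by
  have hjlt := j.is_lt
  unfold ent
  rw [dif_pos ⟨hi, by omega⟩]
  have e1 : (⟨(i:ℕ), by omega⟩ : Fin (2*n)) = i := Fin.ext rfl
  have e2 : (⟨2*n-1-(2*n-1-(j:ℕ)), by omega⟩ : Fin (2*n)) = j :=
    Fin.ext (show 2*n-1-(2*n-1-(j:ℕ)) = (j:ℕ) by omega)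
  rw [e1, e2]

lemma ent_eq' (Y : Mat n) {p u : ℕ} (hp : p < n) (hu : u < n) :
    ent n Y p u = Y ⟨p, by omega⟩ ⟨2*n-1-u, by omega⟩ := by
  unfold ent
  rw [dif_pos ⟨hp, hu⟩]

lemma hsupp {a : Submodule ℂ (Mat n)} (ha : a ∈ abelianIdealsSp n) {Y : Mat n}
    (hY : Y ∈ a) (i j : Fin (2*n)) (hne : Y i j ≠ 0) : blockCond n (Da n a) i j := by
  obtain ⟨hi, hj⟩ := support_block ha hY i j hne
  have hjlt := j.is_lt
  refine ⟨hi, hj, mem_Da.mpr ⟨⟨hi, by omega⟩, Y, hY, ?_⟩⟩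
  rw [ent_eq Y i j hi hj]
  exact hne

lemma hgetMa {a : Submodule ℂ (Mat n)} (ha : a ∈ abelianIdealsSp n) (i j : Fin (2*n))
    (hi : (i:ℕ) < n) (hj : n ≤ (j:ℕ)) (hD : ((i:ℕ), 2*n-1-(j:ℕ)) ∈ Da n a) :
    Mm n i j ∈ a := by
  obtain ⟨-, Y, hY, hne⟩ := mem_Da.mp hD
  rw [ent_eq Y i j hi hj] at hne
  have hjlt := j.is_lt
  exact getM ha hY (show i < j by rw [Fin.lt_def]; omega) hne

set_option maxHeartbeats 1000000 in
theorem classify_isSC {a : Submodule ℂ (Mat n)} (ha : a ∈ abelianIdealsSp n) :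
    isSC n (Da n a) := by
  refine ⟨?_, ?_, ?_⟩
  · rintro ⟨p, u⟩ hq
    exact (mem_Da.mp hq).1
  · rintro ⟨p, u⟩ hq
    obtain ⟨⟨hp, hu⟩, Y, hY, hne⟩ := mem_Da.mp hq
    rw [ent_eq' Y hp hu] at hne
    have hg : gEq n Y := (gEq_iff Y).mp ((ha.1 hY)).1
    have hrj : Fin.rev (⟨2*n-1-u, by omega⟩ : Fin (2*n)) = ⟨u, by omega⟩ :=
      Fin.ext (by rw [val_rev]; show 2*n-1-(2*n-1-u) = u; omega)
    have hri : Fin.rev (⟨p, by omega⟩ : Fin (2*n)) = ⟨2*n-1-p, by omega⟩ :=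
      Fin.ext (by rw [val_rev])
    have hpart : Y (Fin.rev (⟨2*n-1-u, by omega⟩ : Fin (2*n)))
        (Fin.rev (⟨p, by omega⟩ : Fin (2*n))) ≠ 0 := by
      rw [hg ⟨p, by omega⟩ ⟨2*n-1-u, by omega⟩]
      exact mul_ne_zero (tau_ne_zero _ _) hne
    rw [hrj, hri] at hpart
    refine mem_Da.mpr ⟨⟨hu, hp⟩, Y, hY, ?_⟩
    rw [ent_eq' Y hu hp]
    exact hpart
  · rintro ⟨p, u⟩ hq p' u' hp' hu'
    obtain ⟨⟨hp, hu⟩, -⟩ := mem_Da.mp hq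
    have hp'n : p' < n := by omega
    have hu'n : u' < n := by omega
    have hM : Mm n ⟨p, by omega⟩ ⟨2*n-1-u, by omega⟩ ∈ a := by
      apply hgetMa ha _ _ (show p < n from hp) (show n ≤ 2*n-1-u by omega)
      show ((p : ℕ), 2*n-1-(2*n-1-u)) ∈ Da n a
      have e : (2*n-1-(2*n-1-u) : ℕ) = u := by omega
      rw [e]
      exact hq
    have hM2 : Mm n ⟨p', by omega⟩ ⟨2*n-1-u, by omega⟩ ∈ a :=
      step_row ha hM (show p < n from hp) (show n ≤ 2*n-1-u by omega)
        (show p' ≤ p from hp')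
    have hM3 : Mm n ⟨p', by omega⟩ ⟨2*n-1-u', by omega⟩ ∈ a :=
      step_col ha hM2 (show p' < n from hp'n) (show n ≤ 2*n-1-u by omega)
        (show 2*n-1-u ≤ 2*n-1-u' by omega)
    refine mem_Da.mpr ⟨⟨hp'n, hu'n⟩, _, hM3, ?_⟩
    rw [ent_eq' _ hp'n hu'n]
    exact Mm_self_entry_ne (show p' < n from hp'n) (show n ≤ 2*n-1-u' by omega)

set_option maxHeartbeats 1000000 in
lemma aD_le {a : Submodule ℂ (Mat n)} {D : Finset (ℕ × ℕ)}
    (hM : ∀ i j : Fin (2*n), (i:ℕ) < n → n ≤ (j:ℕ) → ((i:ℕ), 2*n-1-(j:ℕ)) ∈ D →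
      Mm n i j ∈ a) : aD n D ≤ a := by
  classical
  rintro Y ⟨hY1, hY2⟩
  set T := Finset.univ.filter
    (fun q : Fin (2*n) × Fin (2*n) => (q.1:ℕ) + (q.2:ℕ) < 2*n ∧ Y q.1 q.2 ≠ 0) with hT
  set f : Fin (2*n) × Fin (2*n) → Mat n := fun q =>
    (if ((q.1:ℕ)+(q.2:ℕ) = 2*n-1) then Y q.1 q.2 / 2 else Y q.1 q.2) • Mm n q.1 q.2
    with hf
  have hrep : Y = ∑ q ∈ T, f q := by
    ext x y
    rw [Matrix.sum_apply]
    have hxlt := x.is_lt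
    have hylt := y.is_lt
    by_cases hY0 : Y x y = 0
    · rw [hY0]
      symm
      apply Finset.sum_eq_zero
      rintro ⟨p, r⟩ hq
      rw [hT, Finset.mem_filter] at hq
      have hq2 : ((p:ℕ) + (r:ℕ) < 2*n ∧ Y p r ≠ 0) := hq.2
      simp only [hf, Matrix.smul_apply, smul_eq_mul]
      by_cases h1 : p = x ∧ r = y
      · obtain ⟨rfl, rfl⟩ := h1
        exact absurd hY0 hq2.2
      · by_cases h2 : Fin.rev r = x ∧ Fin.rev p = y
        · exfalso
          have hp : p = Fin.rev y := by rw [← h2.2, Fin.rev_rev]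
          have hr : r = Fin.rev x := by rw [← h2.1, Fin.rev_rev]
          subst hp; subst hr
          have := hY2 x y
          rw [hY0, mul_zero] at this
          exact hq2.2 this
        · rw [Mm_apply, if_neg h1, if_neg h2]
          ring
    · have hbc : blockCond n D x y := by
        by_contra hc; exact hY0 (hY1 x y hc)
      obtain ⟨hxn, hyn, -⟩ := hbc
      rcases lt_trichotomy ((x:ℕ) + (y:ℕ)) (2*n-1) with hs|hs|hs
      · have hsingle : (∑ q ∈ T, f q x y) = f (x,y) x y := by
          apply Finset.sum_eq_single
          · rintro ⟨p, r⟩ hq hne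
            rw [hT, Finset.mem_filter] at hq
            have hq2 : ((p:ℕ) + (r:ℕ) < 2*n ∧ Y p r ≠ 0) := hq.2
            simp only [hf, Matrix.smul_apply, smul_eq_mul]
            by_cases h1 : p = x ∧ r = y
            · exact absurd (Prod.ext h1.1 h1.2) hne
            · by_cases h2 : Fin.rev r = x ∧ Fin.rev p = y
              · exfalso
                have hp : p = Fin.rev y := by rw [← h2.2, Fin.rev_rev]
                have hr : r = Fin.rev x := by rw [← h2.1, Fin.rev_rev]
                subst hp; subst hr
                have hsum := hq2.1
                rw [val_rev, val_rev] at hsum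
                omega
              · rw [Mm_apply, if_neg h1, if_neg h2]
                ring
          · intro hnot
            exfalso
            apply hnot
            rw [hT, Finset.mem_filter]
            exact ⟨Finset.mem_univ _, by show (x:ℕ) + (y:ℕ) < 2*n; omega, hY0⟩
        rw [hsingle]
        simp only [hf, Matrix.smul_apply, smul_eq_mul]
        rw [if_neg (by omega : ¬ ((x:ℕ) + (y:ℕ) = 2*n-1))]
        rw [Mm_apply, if_pos ⟨rfl, rfl⟩,
          if_neg (fun hh : Fin.rev y = x ∧ Fin.rev x = y => by
            have := congrArg Fin.val hh.1; rw [val_rev] at this; omega)]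
        ring
      · have hsingle : (∑ q ∈ T, f q x y) = f (x,y) x y := by
          apply Finset.sum_eq_single
          · rintro ⟨p, r⟩ hq hne
            rw [hT, Finset.mem_filter] at hq
            have hq2 : ((p:ℕ) + (r:ℕ) < 2*n ∧ Y p r ≠ 0) := hq.2
            simp only [hf, Matrix.smul_apply, smul_eq_mul]
            by_cases h1 : p = x ∧ r = y
            · exact absurd (Prod.ext h1.1 h1.2) hne
            · by_cases h2 : Fin.rev r = x ∧ Fin.rev p = y
              · exfalso
                apply hne
                have hp : p = Fin.rev y := by rw [← h2.2, Fin.rev_rev]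
                have hr : r = Fin.rev x := by rw [← h2.1, Fin.rev_rev]
                have hry : Fin.rev y = x := Fin.ext (by rw [val_rev]; omega)
                have hrx : Fin.rev x = y := Fin.ext (by rw [val_rev]; omega)
                rw [hp, hr, hry, hrx]
              · rw [Mm_apply, if_neg h1, if_neg h2]
                ring
          · intro hnot
            exfalso
            apply hnot
            rw [hT, Finset.mem_filter]
            exact ⟨Finset.mem_univ _, by show (x:ℕ) + (y:ℕ) < 2*n; omega, hY0⟩
        rw [hsingle]
        simp only [hf, Matrix.smul_apply, smul_eq_mul]
        rw [if_pos (hs : (x:ℕ) + (y:ℕ) = 2*n-1)]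
        rw [Mm_apply, if_pos ⟨rfl, rfl⟩,
          if_pos ⟨Fin.ext (by rw [val_rev]; omega), Fin.ext (by rw [val_rev]; omega)⟩,
          tau_block hxn hyn]
        ring
      · have hsingle : (∑ q ∈ T, f q x y) = f (Fin.rev y, Fin.rev x) x y := by
          apply Finset.sum_eq_single
          · rintro ⟨p, r⟩ hq hne
            rw [hT, Finset.mem_filter] at hq
            have hq2 : ((p:ℕ) + (r:ℕ) < 2*n ∧ Y p r ≠ 0) := hq.2
            simp only [hf, Matrix.smul_apply, smul_eq_mul]
            by_cases h1 : p = x ∧ r = y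
            · exfalso
              obtain ⟨rfl, rfl⟩ := h1
              have := hq2.1
              omega
            · by_cases h2 : Fin.rev r = x ∧ Fin.rev p = y
              · exfalso
                apply hne
                have hp : p = Fin.rev y := by rw [← h2.2, Fin.rev_rev]
                have hr : r = Fin.rev x := by rw [← h2.1, Fin.rev_rev]
                rw [hp, hr]
              · rw [Mm_apply, if_neg h1, if_neg h2]
                ring
          · intro hnot
            exfalso
            apply hnot
            rw [hT, Finset.mem_filter]
            refine ⟨Finset.mem_univ _,
              by show ((Fin.rev y : Fin (2*n)):ℕ) + ((Fin.rev x : Fin (2*n)):ℕ) < 2*n;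
                 rw [val_rev, val_rev]; omega, ?_⟩
            rw [hY2 x y]
            exact mul_ne_zero (tau_ne_zero x y) hY0
        rw [hsingle]
        simp only [hf, Matrix.smul_apply, smul_eq_mul]
        rw [if_neg (by rw [val_rev, val_rev]; omega :
          ¬ (((Fin.rev y : Fin (2*n)):ℕ) + ((Fin.rev x : Fin (2*n)):ℕ) = 2*n-1))]
        rw [Mm_apply,
          if_neg (fun hh : Fin.rev y = x ∧ Fin.rev x = y => by
            have := congrArg Fin.val hh.1; rw [val_rev] at this; omega),
          if_pos ⟨Fin.rev_rev x, Fin.rev_rev y⟩, tau_rev, hY2 x y]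
        linear_combination (-(Y x y)) * tau_mul_self x y
  rw [hrep]
  apply Submodule.sum_mem
  rintro ⟨x, y⟩ hq
  rw [hT, Finset.mem_filter] at hq
  obtain ⟨-, hxy, hne⟩ := hq
  have hbc : blockCond n D x y := by
    by_contra hc; exact hne (hY1 x y hc)
  exact Submodule.smul_mem a _ (hM x y hbc.1 hbc.2.1 hbc.2.2)

theorem classify_eq {a : Submodule ℂ (Mat n)} (ha : a ∈ abelianIdealsSp n) :
    a = aD n (Da n a) := by
  apply le_antisymm
  · intro Y hY
    refine ⟨?_, (gEq_iff Y).mp ((ha.1 hY)).1⟩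
    intro i j hc
    by_contra hne
    exact hc (hsupp ha hY i j hne)
  · exact aD_le (fun i j hi hj hD => hgetMa ha i j hi hj hD)


/-! ### Dimension -/

def reps (D : Finset (ℕ × ℕ)) : Finset (ℕ × ℕ) := D.filter (fun q => q.1 ≤ q.2)

lemma blockCond_rev_iff {D : Finset (ℕ × ℕ)} (hSC : isSC n D) (i j : Fin (2*n)) :
    blockCond n D (Fin.rev j) (Fin.rev i) ↔ blockCond n D i j := by
  unfold blockCond
  have hjlt := j.is_lt
  have hilt := i.is_lt
  have e1 : ((Fin.rev j : Fin (2*n)):ℕ) = 2*n-1-(j:ℕ) := val_rev j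
  have e2 : ((Fin.rev i : Fin (2*n)):ℕ) = 2*n-1-(i:ℕ) := val_rev i
  rw [e1, e2]
  constructor
  · rintro ⟨h1, h2, h3⟩
    have e3 : 2*n-1-(2*n-1-(i:ℕ)) = (i:ℕ) := by omega
    rw [e3] at h3
    exact ⟨by omega, by omega, hSC.2.1 _ h3⟩
  · rintro ⟨h1, h2, h3⟩
    have e3 : 2*n-1-(2*n-1-(i:ℕ)) = (i:ℕ) := by omega
    rw [e3]
    exact ⟨by omega, by omega, hSC.2.1 _ h3⟩

instance blockCond_dec (n : ℕ) (D : Finset (ℕ × ℕ)) (i j : Fin (2*n)) :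
    Decidable (blockCond n D i j) :=
  inferInstanceAs (Decidable (_ ∧ _ ∧ _))

noncomputable def gmat (n : ℕ) (D : Finset (ℕ × ℕ)) (hSC : isSC n D)
    (f : {q // q ∈ reps D} → ℂ) : Mat n :=
  Matrix.of fun i j =>
    if h : blockCond n D i j then
      (if h2 : (i:ℕ) ≤ 2*n-1-(j:ℕ) then
        f ⟨((i:ℕ), 2*n-1-(j:ℕ)), Finset.mem_filter.mpr ⟨h.2.2, h2⟩⟩
      else
        f ⟨(2*n-1-(j:ℕ), (i:ℕ)),
          Finset.mem_filter.mpr ⟨hSC.2.1 _ h.2.2, le_of_not_ge h2⟩⟩)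
    else 0

lemma gmat_mem {D : Finset (ℕ × ℕ)} (hSC : isSC n D) (f : {q // q ∈ reps D} → ℂ) :
    gmat n D hSC f ∈ aD n D := by
  constructor
  · intro i j hc
    simp only [gmat, Matrix.of_apply]
    rw [dif_neg hc]
  · intro i j
    have hjlt := j.is_lt
    have hilt := i.is_lt
    simp only [gmat, Matrix.of_apply]
    by_cases hb : blockCond n D i j
    · rw [dif_pos ((blockCond_rev_iff hSC i j).mpr hb), dif_pos hb,
        tau_block hb.1 hb.2.1, one_mul]
      have e1 : ((Fin.rev j : Fin (2*n)):ℕ) = 2*n-1-(j:ℕ) := val_rev j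
      have e2 : 2*n-1-((Fin.rev i : Fin (2*n)):ℕ) = (i:ℕ) := by rw [val_rev]; omega
      have hjn : n ≤ (j:ℕ) := hb.2.1
      by_cases h2 : (i:ℕ) ≤ 2*n-1-(j:ℕ)
      · by_cases h1 : ((Fin.rev j : Fin (2*n)):ℕ) ≤ 2*n-1-((Fin.rev i : Fin (2*n)):ℕ)
        · rw [dif_pos h1, dif_pos h2]
          apply congrArg f
          apply Subtype.ext
          have h1' : 2*n-1-(j:ℕ) ≤ (i:ℕ) := by rw [e1, e2] at h1; exact h1
          exact Prod.ext (by show ((Fin.rev j : Fin (2*n)):ℕ) = (i:ℕ); omega)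
            (by show 2*n-1-((Fin.rev i : Fin (2*n)):ℕ) = 2*n-1-(j:ℕ); omega)
        · rw [dif_neg h1, dif_pos h2]
          apply congrArg f
          apply Subtype.ext
          exact Prod.ext (by show 2*n-1-((Fin.rev i : Fin (2*n)):ℕ) = (i:ℕ); omega)
            (by show ((Fin.rev j : Fin (2*n)):ℕ) = 2*n-1-(j:ℕ); omega)
      · have h1 : ((Fin.rev j : Fin (2*n)):ℕ) ≤ 2*n-1-((Fin.rev i : Fin (2*n)):ℕ) := by
          rw [e1, e2]; omega
        rw [dif_pos h1, dif_neg h2]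
        apply congrArg f
        apply Subtype.ext
        exact Prod.ext (by show ((Fin.rev j : Fin (2*n)):ℕ) = 2*n-1-(j:ℕ); omega)
          (by show 2*n-1-((Fin.rev i : Fin (2*n)):ℕ) = (i:ℕ); omega)
    · rw [dif_neg hb, dif_neg (fun hc => hb ((blockCond_rev_iff hSC i j).mp hc))]
      ring

noncomputable def Fmap (n : ℕ) (D : Finset (ℕ × ℕ)) :
    Mat n →ₗ[ℂ] ({q // q ∈ reps D} → ℂ) where
  toFun Y := fun q => ent n Y q.1.1 q.1.2
  map_add' X Y := by
    funext q
    unfold ent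
    by_cases h : q.1.1 < n ∧ q.1.2 < n
    · simp only [dif_pos h, Matrix.add_apply, Pi.add_apply]
    · simp only [dif_neg h, Pi.add_apply]
      norm_num
  map_smul' c X := by
    funext q
    unfold ent
    by_cases h : q.1.1 < n ∧ q.1.2 < n
    · simp only [dif_pos h, Matrix.smul_apply, Pi.smul_apply, RingHom.id_apply]
    · simp only [dif_neg h, Pi.smul_apply, RingHom.id_apply]
      norm_num

lemma aD_eq_zero_of_reps {D : Finset (ℕ × ℕ)} (hSC : isSC n D) {W : Mat n}
    (hW : W ∈ aD n D) (h0 : ∀ q (hq : q ∈ reps D), ent n W q.1 q.2 = 0) : W = 0 := by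
  ext i j
  rw [Matrix.zero_apply]
  by_cases hb : blockCond n D i j
  · obtain ⟨hi, hj, hD⟩ := hb
    have hjlt := j.is_lt
    by_cases h2 : (i:ℕ) ≤ 2*n-1-(j:ℕ)
    · have hq : ((i:ℕ), 2*n-1-(j:ℕ)) ∈ reps D := Finset.mem_filter.mpr ⟨hD, h2⟩
      have h00 := h0 _ hq
      rw [ent_eq W i j hi hj] at h00
      exact h00
    · have h2' : 2*n-1-(j:ℕ) ≤ (i:ℕ) := le_of_not_ge h2
      have hq : (2*n-1-(j:ℕ), (i:ℕ)) ∈ reps D :=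
        Finset.mem_filter.mpr ⟨hSC.2.1 _ hD, h2'⟩
      have h00 := h0 _ hq
      have hu : 2*n-1-(j:ℕ) < n := by omega
      rw [ent_eq' W hu hi] at h00
      have e1 : (⟨2*n-1-(j:ℕ), by omega⟩ : Fin (2*n)) = Fin.rev j :=
        Fin.ext (by rw [val_rev])
      have e2 : (⟨2*n-1-(i:ℕ), by omega⟩ : Fin (2*n)) = Fin.rev i :=
        Fin.ext (by show 2*n-1-(i:ℕ) = ((Fin.rev i : Fin (2*n)):ℕ); rw [val_rev])
      rw [e1, e2] at h00
      have hg := hW.2 i j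
      rw [tau_block hi hj, one_mul] at hg
      rw [hg] at h00
      exact h00
  · exact hW.1 i j hb

lemma Fmap_gmat {D : Finset (ℕ × ℕ)} (hSC : isSC n D) (f : {q // q ∈ reps D} → ℂ)
    (q : ℕ × ℕ) (hq : q ∈ reps D) :
    Fmap n D (gmat n D hSC f) ⟨q, hq⟩ = f ⟨q, hq⟩ := by
  obtain ⟨p, u⟩ := q
  obtain ⟨hqD, hqle⟩ := Finset.mem_filter.mp hq
  obtain ⟨hp, hu⟩ := hSC.1 _ hqD
  show ent n (gmat n D hSC f) p u = _
  rw [ent_eq' _ hp hu]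
  simp only [gmat, Matrix.of_apply]
  have e : 2*n-1-((⟨2*n-1-u, by omega⟩ : Fin (2*n)):ℕ) = u := by
    show 2*n-1-(2*n-1-u) = u
    omega
  have hb : blockCond n D (⟨p, by omega⟩ : Fin (2*n)) ⟨2*n-1-u, by omega⟩ := by
    refine ⟨hp, by show n ≤ 2*n-1-u; omega, ?_⟩
    rw [e]
    exact hqD
  rw [dif_pos hb]
  have h2 : ((⟨p, by omega⟩ : Fin (2*n)):ℕ) ≤ 2*n-1-((⟨2*n-1-u, by omega⟩ : Fin (2*n)):ℕ) := by
    rw [e]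
    exact hqle
  rw [dif_pos h2]
  apply congrArg f
  apply Subtype.ext
  exact Prod.ext (by show (p:ℕ) = p; rfl) (by show 2*n-1-(2*n-1-u) = u; omega)

lemma finrank_aD {D : Finset (ℕ × ℕ)} (hSC : isSC n D) :
    Module.finrank ℂ (aD n D) = (reps D).card := by
  classical
  have hinj : Function.Injective ((Fmap n D).comp (aD n D).subtype) := by
    rw [← LinearMap.ker_eq_bot]
    rw [LinearMap.ker_eq_bot']
    rintro ⟨W, hW⟩ hzero
    apply Subtype.ext
    show W = 0
    apply aD_eq_zero_of_reps hSC hW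
    intro q hq
    have := congrFun hzero ⟨q, hq⟩
    exact this
  have hsurj : Function.Surjective ((Fmap n D).comp (aD n D).subtype) := by
    intro f
    refine ⟨⟨gmat n D hSC f, gmat_mem hSC f⟩, ?_⟩
    funext ⟨q, hq⟩
    exact Fmap_gmat hSC f q hq
  have e : (aD n D) ≃ₗ[ℂ] ({q // q ∈ reps D} → ℂ) :=
    LinearEquiv.ofBijective ((Fmap n D).comp (aD n D).subtype) ⟨hinj, hsurj⟩
  rw [e.finrank_eq, Module.finrank_fintype_fun_eq_card, Fintype.card_coe]


/-! ### Combinatorics of self-conjugate diagrams -/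

lemma dc_eq_range (t : Finset ℕ) (hdc : ∀ x ∈ t, ∀ y, y ≤ x → y ∈ t) :
    t = Finset.range t.card := by
  ext u
  rw [Finset.mem_range]
  constructor
  · intro hu
    have hsub : Finset.range (u+1) ⊆ t := by
      intro y hy
      exact hdc u hu y (Nat.lt_succ_iff.mp (Finset.mem_range.mp hy))
    have hc := Finset.card_le_card hsub
    rw [Finset.card_range] at hc
    omega
  · intro hu
    by_contra hnot
    have hsub : t ⊆ Finset.range u := by
      intro x hx
      rw [Finset.mem_range]
      by_contra hxu
      exact hnot (hdc x hx u (by omega))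
    have hc := Finset.card_le_card hsub
    rw [Finset.card_range] at hc
    omega

def rank (A : Finset ℕ) (a : ℕ) : ℕ := (A.filter (fun b => a < b)).card

lemma rank_lt_card {A : Finset ℕ} {a : ℕ} (ha : a ∈ A) : rank A a < A.card := by
  have hsub : A.filter (fun b => a < b) ⊆ A.erase a := by
    intro b hb
    obtain ⟨hbA, hab⟩ := Finset.mem_filter.mp hb
    exact Finset.mem_erase.mpr ⟨by omega, hbA⟩
  have h1 := Finset.card_le_card hsub
  have h2 : (A.erase a).card < A.card := Finset.card_erase_lt_of_mem ha
  exact lt_of_le_of_lt h1 h2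

lemma rank_anti {A : Finset ℕ} {a b : ℕ} (hb : b ∈ A) (hab : a < b) :
    rank A b < rank A a := by
  apply Finset.card_lt_card
  constructor
  · intro c hc
    obtain ⟨hcA, hbc⟩ := Finset.mem_filter.mp hc
    exact Finset.mem_filter.mpr ⟨hcA, by omega⟩
  · intro hcon
    have : b ∈ A.filter (fun c => b < c) := hcon (Finset.mem_filter.mpr ⟨hb, hab⟩)
    simp at this

lemma rank_injOn {A : Finset ℕ} {a b : ℕ} (ha : a ∈ A) (hb : b ∈ A)
    (h : rank A a = rank A b) : a = b := by
  rcases lt_trichotomy a b with hab|hab|hab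
  · have := rank_anti hb hab; omega
  · exact hab
  · have := rank_anti ha hab; omega

lemma rank_diff_le {A : Finset ℕ} {a b : ℕ} (hab : a < b) :
    rank A a ≤ rank A b + (b - a) := by
  have hsub : A.filter (fun c => a < c) ⊆
      (A.filter (fun c => b < c)) ∪ Finset.Ioc a b := by
    intro c hc
    obtain ⟨hcA, hac⟩ := Finset.mem_filter.mp hc
    rcases le_or_gt c b with h|h
    · exact Finset.mem_union_right _ (Finset.mem_Ioc.mpr ⟨hac, h⟩)
    · exact Finset.mem_union_left _ (Finset.mem_filter.mpr ⟨hcA, h⟩)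
  have h1 := Finset.card_le_card hsub
  have h2 := Finset.card_union_le (A.filter (fun c => b < c)) (Finset.Ioc a b)
  have h3 : (Finset.Ioc a b).card = b - a := Nat.card_Ioc a b
  unfold rank
  omega

lemma rank_add_le {A : Finset ℕ} {a b : ℕ} (ha : a ∈ A) (hb : b ∈ A)
    (h : rank A b ≤ rank A a) : rank A a + a ≤ rank A b + b := by
  rcases lt_trichotomy a b with hab|hab|hab
  · have := rank_diff_le (A := A) hab
    omega
  · subst hab
    omega
  · have h3 : rank A a < rank A b := rank_anti ha hab
    omega

lemma rank_surj {A : Finset ℕ} {d : ℕ} (hd : d < A.card) : ∃ a ∈ A, rank A a = d := by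
  have himg : A.image (rank A) = Finset.range A.card := by
    apply Finset.eq_of_subset_of_card_le
    · intro x hx
      obtain ⟨a, ha, rfl⟩ := Finset.mem_image.mp hx
      exact Finset.mem_range.mpr (rank_lt_card ha)
    · rw [Finset.card_range, Finset.card_image_of_injOn (fun a ha b hb h => rank_injOn ha hb h)]
  have : d ∈ A.image (rank A) := by
    rw [himg]; exact Finset.mem_range.mpr hd
  obtain ⟨a, ha, h⟩ := Finset.mem_image.mp this
  exact ⟨a, ha, h⟩

lemma rank_add_lt_n {A : Finset ℕ} {a : ℕ} (hA : A ⊆ Finset.range n) (ha : a ∈ A) :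
    rank A a + a < n := by
  have han : a < n := Finset.mem_range.mp (hA ha)
  have hsub : A.filter (fun b => a < b) ⊆ Finset.Ioo a n := by
    intro b hb
    obtain ⟨hbA, hab⟩ := Finset.mem_filter.mp hb
    exact Finset.mem_Ioo.mpr ⟨hab, Finset.mem_range.mp (hA hbA)⟩
  have h1 := Finset.card_le_card hsub
  have h2 : (Finset.Ioo a n).card = n - a - 1 := Nat.card_Ioo a n
  unfold rank
  omega

/-- the self-conjugate diagram attached to a finset `A ⊆ range n`
(parts of the strict partition are `a+1`, `a ∈ A`). -/
def DofA (A : Finset ℕ) : Finset (ℕ × ℕ) :=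
  A.biUnion (fun a =>
    ((Finset.Icc (rank A a) (rank A a + a)).image (fun q => (rank A a, q))) ∪
    ((Finset.Icc (rank A a) (rank A a + a)).image (fun q => (q, rank A a))))

lemma mem_DofA {A : Finset ℕ} {p u : ℕ} :
    (p,u) ∈ DofA A ↔ ∃ a ∈ A, min p u = rank A a ∧ max p u ≤ rank A a + a := by
  unfold DofA
  rw [Finset.mem_biUnion]
  constructor
  · rintro ⟨a, ha, hmem⟩
    refine ⟨a, ha, ?_⟩
    rcases Finset.mem_union.mp hmem with h|h
    · obtain ⟨q, hq, heq⟩ := Finset.mem_image.mp h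
      obtain ⟨hq1, hq2⟩ := Finset.mem_Icc.mp hq
      have e1 : p = rank A a := (Prod.ext_iff.mp heq.symm).1
      have e2 : u = q := (Prod.ext_iff.mp heq.symm).2
      subst e1; subst e2
      constructor
      · omega
      · omega
    · obtain ⟨q, hq, heq⟩ := Finset.mem_image.mp h
      obtain ⟨hq1, hq2⟩ := Finset.mem_Icc.mp hq
      have e1 : p = q := (Prod.ext_iff.mp heq.symm).1
      have e2 : u = rank A a := (Prod.ext_iff.mp heq.symm).2
      subst e1; subst e2
      constructor
      · omega
      · omega
  · rintro ⟨a, ha, h1, h2⟩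
    refine ⟨a, ha, ?_⟩
    rcases le_total p u with hpu|hpu
    · apply Finset.mem_union_left
      apply Finset.mem_image.mpr
      refine ⟨u, Finset.mem_Icc.mpr ⟨?_, ?_⟩, ?_⟩
      · omega
      · omega
      · have : p = rank A a := by omega
        rw [this]
    · apply Finset.mem_union_right
      apply Finset.mem_image.mpr
      refine ⟨p, Finset.mem_Icc.mpr ⟨?_, ?_⟩, ?_⟩
      · omega
      · omega
      · have : u = rank A a := by omega
        rw [this]

lemma isSC_DofA {A : Finset ℕ} (hA : A ⊆ Finset.range n) : isSC n (DofA A) := by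
  refine ⟨?_, ?_, ?_⟩
  · rintro ⟨p, u⟩ hq
    obtain ⟨a, ha, h1, h2⟩ := mem_DofA.mp hq
    have := rank_add_lt_n hA ha
    constructor
    · show p < n; omega
    · show u < n; omega
  · rintro ⟨p, u⟩ hq
    obtain ⟨a, ha, h1, h2⟩ := mem_DofA.mp hq
    apply mem_DofA.mpr
    exact ⟨a, ha, by omega, by omega⟩
  · rintro ⟨p, u⟩ hq p' u' hp' hu'
    obtain ⟨a, ha, h1, h2⟩ := mem_DofA.mp hq
    have hm : min p' u' ≤ min p u := by omega
    have hmlt : min p' u' < A.card := by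
      have := rank_lt_card ha
      omega
    obtain ⟨a', ha', hr'⟩ := rank_surj hmlt
    apply mem_DofA.mpr
    refine ⟨a', ha', hr'.symm, ?_⟩
    have hle : rank A a + a ≤ rank A a' + a' := rank_add_le ha ha' (by omega)
    omega


/-! ### Row functions and the correspondence with subsets -/

def rfun (D : Finset (ℕ × ℕ)) (p : ℕ) : ℕ :=
  ((D.filter (fun q => q.1 = p)).image Prod.snd).card

lemma mem_row_iff {D : Finset (ℕ×ℕ)} (hSC : isSC n D) (p u : ℕ) :
    (p, u) ∈ D ↔ u < rfun D p := by
  have hmem : ∀ v, (v ∈ (D.filter (fun q => q.1 = p)).image Prod.snd) ↔ (p, v) ∈ D := by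
    intro v
    rw [Finset.mem_image]
    constructor
    · rintro ⟨⟨x, y⟩, hab, rfl⟩
      obtain ⟨h1, h2⟩ := Finset.mem_filter.mp hab
      have hxp : x = p := h2
      subst hxp
      exact h1
    · intro h
      exact ⟨(p, v), Finset.mem_filter.mpr ⟨h, rfl⟩, rfl⟩
  have hdc : ∀ x ∈ (D.filter (fun q => q.1 = p)).image Prod.snd, ∀ y, y ≤ x →
      y ∈ (D.filter (fun q => q.1 = p)).image Prod.snd := by
    intro x hx y hy
    rw [hmem] at hx ⊢
    exact hSC.2.2 _ hx p y le_rfl hy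
  have hr := dc_eq_range _ hdc
  rw [← hmem, hr, Finset.mem_range]
  exact Iff.rfl

lemma rfun_bound {D : Finset (ℕ×ℕ)} (hSC : isSC n D) (p : ℕ) : rfun D p ≤ n := by
  by_contra h
  push_neg at h
  have hm : (p, n) ∈ D := (mem_row_iff hSC p n).mpr (by omega)
  have := (hSC.1 _ hm).2
  omega

lemma rfun_mono {D : Finset (ℕ×ℕ)} (hSC : isSC n D) {p' p : ℕ} (h : p' ≤ p) :
    rfun D p ≤ rfun D p' := by
  rcases Nat.eq_zero_or_pos (rfun D p) with h0|h0
  · omega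
  · have hm : (p, rfun D p - 1) ∈ D := (mem_row_iff hSC _ _).mpr (by omega)
    have hm2 : (p', rfun D p - 1) ∈ D := hSC.2.2 _ hm p' _ h le_rfl
    have := (mem_row_iff hSC _ _).mp hm2
    omega

def kD (n : ℕ) (D : Finset (ℕ×ℕ)) : ℕ :=
  ((Finset.range n).filter (fun p => p < rfun D p)).card

lemma diag_iff {D : Finset (ℕ×ℕ)} (hSC : isSC n D) (p : ℕ) :
    p < rfun D p ↔ p < kD n D := by
  have hdc : ∀ x ∈ (Finset.range n).filter (fun p => p < rfun D p), ∀ y, y ≤ x →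
      y ∈ (Finset.range n).filter (fun p => p < rfun D p) := by
    intro x hx y hy
    obtain ⟨hx1, hx2⟩ := Finset.mem_filter.mp hx
    rw [Finset.mem_range] at hx1
    have := rfun_mono hSC hy
    exact Finset.mem_filter.mpr ⟨Finset.mem_range.mpr (by omega), by omega⟩
  have heq := dc_eq_range _ hdc
  constructor
  · intro h
    have hpn : p < n := lt_of_lt_of_le h (rfun_bound hSC p)
    have hmem : p ∈ (Finset.range n).filter (fun p => p < rfun D p) :=
      Finset.mem_filter.mpr ⟨Finset.mem_range.mpr hpn, h⟩
    rw [heq, Finset.mem_range] at hmem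
    exact hmem
  · intro h
    have hmem : p ∈ (Finset.range n).filter (fun p => p < rfun D p) := by
      rw [heq, Finset.mem_range]; exact h
    exact (Finset.mem_filter.mp hmem).2

def PhiD (n : ℕ) (D : Finset (ℕ×ℕ)) : Finset ℕ :=
  (Finset.range (kD n D)).image (fun d => rfun D d - d - 1)

lemma g_strict {D : Finset (ℕ×ℕ)} (hSC : isSC n D) {d d' : ℕ} (hd' : d' < kD n D)
    (hdd : d < d') : rfun D d' - d' - 1 < rfun D d - d - 1 := by
  have h1 : d' < rfun D d' := (diag_iff hSC d').mpr hd'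
  have h2 : rfun D d' ≤ rfun D d := rfun_mono hSC (le_of_lt hdd)
  omega

lemma PhiD_sub {D : Finset (ℕ×ℕ)} (hSC : isSC n D) : PhiD n D ⊆ Finset.range n := by
  intro b hb
  obtain ⟨d, hd, rfl⟩ := Finset.mem_image.mp hb
  rw [Finset.mem_range] at hd
  have h1 : d < rfun D d := (diag_iff hSC d).mpr hd
  have h2 := rfun_bound hSC d
  exact Finset.mem_range.mpr (by omega)

lemma rank_PhiD {D : Finset (ℕ×ℕ)} (hSC : isSC n D) {d : ℕ} (hd : d < kD n D) :
    rank (PhiD n D) (rfun D d - d - 1) = d := by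
  unfold rank
  have hfil : (PhiD n D).filter (fun b => rfun D d - d - 1 < b) =
      (Finset.range d).image (fun d' => rfun D d' - d' - 1) := by
    ext b
    rw [Finset.mem_filter, PhiD, Finset.mem_image, Finset.mem_image]
    constructor
    · rintro ⟨⟨d', hd', rfl⟩, hgt⟩
      rw [Finset.mem_range] at hd'
      refine ⟨d', Finset.mem_range.mpr ?_, rfl⟩
      by_contra hle
      push_neg at hle
      rcases eq_or_lt_of_le hle with heq|hlt
      · subst heq; omega
      · have := g_strict hSC hd' hlt
        omega
    · rintro ⟨d', hd', rfl⟩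
      rw [Finset.mem_range] at hd'
      have h1 := g_strict hSC hd hd'
      exact ⟨⟨d', Finset.mem_range.mpr (by omega), rfl⟩, h1⟩
  rw [hfil, Finset.card_image_of_injOn, Finset.card_range]
  intro x hx y hy hxy
  simp only [Finset.coe_range, Set.mem_Iio] at hx hy
  have hxy' : rfun D x - x - 1 = rfun D y - y - 1 := hxy
  clear hxy
  rcases lt_trichotomy x y with h|h|h
  · have := g_strict hSC (by omega : y < kD n D) h; omega
  · exact h
  · have := g_strict hSC (by omega : x < kD n D) h; omega

lemma DofA_PhiD {D : Finset (ℕ×ℕ)} (hSC : isSC n D) : DofA (PhiD n D) = D := by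
  ext ⟨p, u⟩
  rw [mem_DofA]
  constructor
  · rintro ⟨a, ha, h1, h2⟩
    obtain ⟨d, hd, rfl⟩ := Finset.mem_image.mp ha
    rw [Finset.mem_range] at hd
    rw [rank_PhiD hSC hd] at h1 h2
    have hdr : d < rfun D d := (diag_iff hSC d).mpr hd
    rcases le_total p u with hpu|hpu
    · have hp : p = d := by omega
      subst hp
      exact (mem_row_iff hSC _ _).mpr (by omega)
    · have hu : u = d := by omega
      subst hu
      exact hSC.2.1 (u, p) ((mem_row_iff hSC _ _).mpr (by omega))
  · intro hpu
    have hsym : (u, p) ∈ D := hSC.2.1 _ hpu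
    have hrow : u < rfun D p := (mem_row_iff hSC _ _).mp hpu
    have hrow2 : p < rfun D u := (mem_row_iff hSC _ _).mp hsym
    rcases le_total p u with hpu2|hpu2
    · have hk : p < kD n D := (diag_iff hSC p).mp (by omega)
      refine ⟨rfun D p - p - 1,
        Finset.mem_image.mpr ⟨p, Finset.mem_range.mpr hk, rfl⟩, ?_, ?_⟩
      · rw [rank_PhiD hSC hk]; omega
      · rw [rank_PhiD hSC hk]; omega
    · have hk : u < kD n D := (diag_iff hSC u).mp (by omega)
      refine ⟨rfun D u - u - 1,
        Finset.mem_image.mpr ⟨u, Finset.mem_range.mpr hk, rfl⟩, ?_, ?_⟩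
      · rw [rank_PhiD hSC hk]; omega
      · rw [rank_PhiD hSC hk]; omega

lemma rfun_DofA_lt {A : Finset ℕ} (hA : A ⊆ Finset.range n) {p : ℕ} (hp : p < A.card)
    {a : ℕ} (ha : a ∈ A) (hr : rank A a = p) : rfun (DofA A) p = p + a + 1 := by
  have hSC := isSC_DofA hA
  have h1 : (p, p + a) ∈ DofA A := mem_DofA.mpr ⟨a, ha, by omega, by omega⟩
  have h2 : (p, p + a + 1) ∉ DofA A := by
    intro hmem
    obtain ⟨a', ha', e1, e2⟩ := mem_DofA.mp hmem
    have hmin : min p (p+a+1) = p := by omega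
    rw [hmin] at e1
    have hae : a' = a := rank_injOn ha' ha (by omega)
    rw [hae] at e2
    omega
  have hb1 := (mem_row_iff hSC _ _).mp h1
  have hb2 : ¬ (p + a + 1 < rfun (DofA A) p) := fun hc => h2 ((mem_row_iff hSC _ _).mpr hc)
  omega

lemma rfun_DofA_ge {A : Finset ℕ} (hA : A ⊆ Finset.range n) {p : ℕ} (hp : A.card ≤ p) :
    rfun (DofA A) p ≤ A.card := by
  have hSC := isSC_DofA hA
  by_contra hc
  push_neg at hc
  have hm : (p, A.card) ∈ DofA A := (mem_row_iff hSC _ _).mpr hc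
  obtain ⟨a, ha, e1, e2⟩ := mem_DofA.mp hm
  have := rank_lt_card ha
  omega

lemma PhiD_DofA {A : Finset ℕ} (hA : A ⊆ Finset.range n) : PhiD n (DofA A) = A := by
  have hSC := isSC_DofA hA
  have hcard_le : A.card ≤ n := by
    have := Finset.card_le_card hA
    rwa [Finset.card_range] at this
  have hk : kD n (DofA A) = A.card := by
    unfold kD
    have hfil : (Finset.range n).filter (fun p => p < rfun (DofA A) p)
        = Finset.range A.card := by
      ext p
      rw [Finset.mem_filter, Finset.mem_range, Finset.mem_range]
      constructor
      · rintro ⟨hpn, hpr⟩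
        by_contra hc
        push_neg at hc
        have := rfun_DofA_ge hA hc
        omega
      · intro hp
        obtain ⟨a, ha, hr⟩ := rank_surj hp
        have := rfun_DofA_lt hA hp ha hr
        exact ⟨by omega, by omega⟩
    rw [hfil, Finset.card_range]
  unfold PhiD
  rw [hk]
  ext b
  rw [Finset.mem_image]
  constructor
  · rintro ⟨d, hd, rfl⟩
    rw [Finset.mem_range] at hd
    obtain ⟨a, ha, hr⟩ := rank_surj hd
    rw [rfun_DofA_lt hA hd ha hr]
    have e : d + a + 1 - d - 1 = a := by omega
    rw [e]
    exact ha
  · intro hb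
    refine ⟨rank A b, Finset.mem_range.mpr (rank_lt_card hb), ?_⟩
    rw [rfun_DofA_lt hA (rank_lt_card hb) hb rfl]
    omega

lemma reps_DofA_card {A : Finset ℕ} (hA : A ⊆ Finset.range n) :
    (reps (DofA A)).card = ∑ a ∈ A, (a+1) := by
  have hrepr : reps (DofA A) = A.biUnion (fun a =>
      (Finset.Icc (rank A a) (rank A a + a)).image (fun q => (rank A a, q))) := by
    ext ⟨p, u⟩
    rw [reps, Finset.mem_filter, Finset.mem_biUnion]
    constructor
    · rintro ⟨hmem, hle⟩
      have hle' : p ≤ u := hle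
      obtain ⟨a, ha, h1, h2⟩ := mem_DofA.mp hmem
      refine ⟨a, ha, Finset.mem_image.mpr ⟨u, Finset.mem_Icc.mpr ⟨by omega, by omega⟩, ?_⟩⟩
      have hp : p = rank A a := by omega
      rw [hp]
    · rintro ⟨a, ha, hmem⟩
      obtain ⟨q, hq, heq⟩ := Finset.mem_image.mp hmem
      obtain ⟨hq1, hq2⟩ := Finset.mem_Icc.mp hq
      have e1 : p = rank A a := (Prod.ext_iff.mp heq.symm).1
      have e2 : u = q := (Prod.ext_iff.mp heq.symm).2
      exact ⟨mem_DofA.mpr ⟨a, ha, by omega, by omega⟩, by show p ≤ u; omega⟩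
  rw [hrepr, Finset.card_biUnion]
  · apply Finset.sum_congr rfl
    intro a _
    rw [Finset.card_image_of_injective _ (fun x y h => (Prod.ext_iff.mp h).2),
      Nat.card_Icc]
    omega
  · intro a ha b hb hab
    apply Finset.disjoint_left.mpr
    rintro ⟨p, u⟩ hpa hpb
    obtain ⟨q1, _, he1⟩ := Finset.mem_image.mp hpa
    obtain ⟨q2, _, he2⟩ := Finset.mem_image.mp hpb
    have e1 : rank A a = p := (Prod.ext_iff.mp he1).1
    have e2 : rank A b = p := (Prod.ext_iff.mp he2).1
    exact hab (rank_injOn ha hb (by omega))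

/-! ### `Da ∘ aD = id` on self-conjugate diagrams -/

lemma Da_aD {D : Finset (ℕ×ℕ)} (hSC : isSC n D) : Da n (aD n D) = D := by
  ext ⟨p, u⟩
  constructor
  · intro hq
    obtain ⟨⟨hp, hu⟩, Y, hY, hne⟩ := mem_Da.mp hq
    rw [ent_eq' Y hp hu] at hne
    have hb : blockCond n D ⟨p, by omega⟩ ⟨2*n-1-u, by omega⟩ := by
      by_contra hc
      exact hne (hY.1 _ _ hc)
    have h3 := hb.2.2
    have e : 2*n-1-((⟨2*n-1-u, by omega⟩ : Fin (2*n)):ℕ) = u := by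
      show 2*n-1-(2*n-1-u) = u
      omega
    rw [e] at h3
    exact h3
  · intro hq
    obtain ⟨hp, hu⟩ := hSC.1 _ hq
    refine mem_Da.mpr ⟨⟨hp, hu⟩, Mm n ⟨p, by omega⟩ ⟨2*n-1-u, by omega⟩, ?_, ?_⟩
    · apply Mm_mem_aD hSC (show p < n from hp) (show n ≤ 2*n-1-u by omega)
      show ((p:ℕ), 2*n-1-(2*n-1-u)) ∈ D
      rw [show 2*n-1-(2*n-1-u) = u from by omega]
      exact hq
    · rw [ent_eq' _ hp hu]
      exact Mm_self_entry_ne (show p < n from hp) (show n ≤ 2*n-1-u by omega)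


/-! ### The generating polynomial -/

lemma coeff_prod_eq (n i : ℕ) :
    (∏ k ∈ Finset.range n, (1 + (Polynomial.X : Polynomial ℕ) ^ (k + 1))).coeff i
      = ((Finset.range n).powerset.filter (fun A => i = ∑ a ∈ A, (a+1))).card := by
  classical
  have h1 : ∏ k ∈ Finset.range n, (1 + (Polynomial.X : Polynomial ℕ)^(k+1))
      = ∑ A ∈ (Finset.range n).powerset, (Polynomial.X : Polynomial ℕ)^(∑ a ∈ A, (a+1)) := by
    calc ∏ k ∈ Finset.range n, (1 + (Polynomial.X : Polynomial ℕ)^(k+1))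
        = ∏ k ∈ Finset.range n, ((Polynomial.X : Polynomial ℕ)^(k+1) + 1) :=
          Finset.prod_congr rfl fun k _ => add_comm _ _
      _ = ∑ A ∈ (Finset.range n).powerset,
            (∏ a ∈ A, (Polynomial.X : Polynomial ℕ)^(a+1))
              * ∏ a ∈ Finset.range n \ A, (1 : Polynomial ℕ) :=
          Finset.prod_add _ _ _
      _ = ∑ A ∈ (Finset.range n).powerset, (Polynomial.X : Polynomial ℕ)^(∑ a ∈ A, (a+1)) := by
          apply Finset.sum_congr rfl
          intro A _
          rw [Finset.prod_const_one, mul_one, Finset.prod_pow_eq_pow_sum]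
  rw [h1, Polynomial.finset_sum_coeff]
  rw [Finset.sum_congr rfl (fun A _ => Polynomial.coeff_X_pow _ _)]
  rw [Finset.sum_boole, Nat.cast_id]

end Stmt14

theorem stmt14 (n : ℕ) (hn : 1 ≤ n) (i : ℕ) :
    Set.ncard {a | a ∈ abelianIdealsSp n ∧ Module.finrank ℂ a = i} =
      (∏ k ∈ Finset.range n, (1 + (X : Polynomial ℕ) ^ (k + 1))).coeff i := by
  classical
  rw [Stmt14.coeff_prod_eq]
  have hset : {a | a ∈ abelianIdealsSp n ∧ Module.finrank ℂ a = i}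
      = (fun A => Stmt14.aD n (Stmt14.DofA A)) ''
          ↑((Finset.range n).powerset.filter (fun A => i = ∑ a ∈ A, (a+1))) := by
    ext a
    simp only [Set.mem_setOf_eq, Set.mem_image, Finset.mem_coe]
    constructor
    · rintro ⟨ha, hrank⟩
      have hSC := Stmt14.classify_isSC ha
      have hsub : Stmt14.PhiD n (Stmt14.Da n a) ⊆ Finset.range n := Stmt14.PhiD_sub hSC
      have heqD : Stmt14.DofA (Stmt14.PhiD n (Stmt14.Da n a)) = Stmt14.Da n a :=
        Stmt14.DofA_PhiD hSC
      refine ⟨Stmt14.PhiD n (Stmt14.Da n a), ?_, ?_⟩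
      · apply Finset.mem_filter.mpr
        refine ⟨Finset.mem_powerset.mpr hsub, ?_⟩
        have h1 := Stmt14.reps_DofA_card hsub
        rw [heqD] at h1
        have h2 : Module.finrank ℂ a = Module.finrank ℂ (Stmt14.aD n (Stmt14.Da n a)) :=
          congrArg (fun s : Submodule ℂ (Stmt14.Mat n) => Module.finrank ℂ s)
            (Stmt14.classify_eq ha)
        have h3 : Module.finrank ℂ (Stmt14.aD n (Stmt14.Da n a)) =
            (Stmt14.reps (Stmt14.Da n a)).card := Stmt14.finrank_aD hSC
        omega
      · rw [heqD]
        exact (Stmt14.classify_eq ha).symm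
    · rintro ⟨A, hA, rfl⟩
      obtain ⟨hA1, hA2⟩ := Finset.mem_filter.mp hA
      have hsub := Finset.mem_powerset.mp hA1
      have hSC := Stmt14.isSC_DofA hsub
      refine ⟨Stmt14.aD_mem_abelianIdeals hSC, ?_⟩
      rw [Stmt14.finrank_aD hSC, Stmt14.reps_DofA_card hsub]
      omega
  rw [hset, Set.ncard_image_of_injOn, Set.ncard_coe_finset]
  intro A hA B hB hAB
  have hsubA := Finset.mem_powerset.mp (Finset.mem_filter.mp (Finset.mem_coe.mp hA)).1
  have hsubB := Finset.mem_powerset.mp (Finset.mem_filter.mp (Finset.mem_coe.mp hB)).1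
  have h1 : Stmt14.Da n (Stmt14.aD n (Stmt14.DofA A)) = Stmt14.DofA A :=
    Stmt14.Da_aD (Stmt14.isSC_DofA hsubA)
  have h2 : Stmt14.Da n (Stmt14.aD n (Stmt14.DofA B)) = Stmt14.DofA B :=
    Stmt14.Da_aD (Stmt14.isSC_DofA hsubB)
  have hAB' : Stmt14.aD n (Stmt14.DofA A) = Stmt14.aD n (Stmt14.DofA B) := hAB
  have hDD : Stmt14.DofA A = Stmt14.DofA B := by
    rw [← h1, ← h2, hAB']
  calc A = Stmt14.PhiD n (Stmt14.DofA A) := (Stmt14.PhiD_DofA hsubA).symm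
    _ = Stmt14.PhiD n (Stmt14.DofA B) := by rw [hDD]
    _ = B := Stmt14.PhiD_DofA hsubB
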